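/- arXiv:1207.2430 — 13 statements merged into one kernel-verified Lean document; each statement's English description precedes it below -/
import Mathlib

section
/- Let G = (V,E) be a connected bipartite graph with bipartition V = Y ∪ Z where Y ≠ ∅ and Z ≠ ∅. Then ∑_{F ⊆ E} (−1)^{|F|} · D((V,F), x) = (−1)^{|Y|} x^{|Z|} + (−1)^{|Z|} x^{|Y|}, where the sum ranges over all spanning subgraphs (V,F) of G. -/
open Finset Polynomial

variable {V : Type*}

def dominates (H : SimpleGraph V) (W : Finset V) : Prop :=
  ∀ v : V, v ∈ W ∨ ∃ u ∈ W, H.Adj u v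

open scoped Classical in
noncomputable def domPoly [Fintype V] (H : SimpleGraph V) : Polynomial ℤ :=
  ∑ W ∈ Finset.univ.powerset.filter (fun W => dominates H W), X ^ W.card

open scoped Classical in
noncomputable def compOrders [Fintype V] (H : SimpleGraph V) : Multiset ℕ :=
  (Finset.univ : Finset H.ConnectedComponent).val.map (fun c => Nat.card c.supp)

/- ### Auxiliary material -/

lemma alt_sum_poly {α : Type*} [DecidableEq α] (x : Finset α) :
    (∑ m ∈ x.powerset, (-1 : Polynomial ℤ) ^ m.card) = if x = ∅ then 1 else 0 := by
  have h := Finset.sum_powerset_neg_one_pow_card (x := x)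
  have h2 : (∑ m ∈ x.powerset, (-1 : Polynomial ℤ) ^ m.card)
      = C (∑ m ∈ x.powerset, (-1 : ℤ) ^ m.card) := by
    rw [map_sum]
    exact Finset.sum_congr rfl fun m _ => by simp
  rw [h2, h]
  split <;> simp

section Aux

variable [Fintype V] [DecidableEq V] (G : SimpleGraph V) [DecidableRel G.Adj]

open scoped Classical in
/-- The edges of `G` joining `W` to the vertex `v`. -/
noncomputable def crossE (W : Finset V) (v : V) : Finset (Sym2 V) :=
  G.edgeFinset.filter (fun e => ∃ u ∈ W, e = s(u, v))

lemma dom_iff (W : Finset V) (F : Finset (Sym2 V)) (hF : F ⊆ G.edgeFinset) :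
    dominates (SimpleGraph.fromEdgeSet (↑F : Set (Sym2 V))) W ↔
      ∀ v ∈ Finset.univ \ W, (F ∩ crossE G W v).Nonempty := by
  constructor
  · intro hd v hv
    rw [mem_sdiff] at hv
    rcases hd v with h | ⟨u, hu, hadj⟩
    · exact absurd h hv.2
    · rw [SimpleGraph.fromEdgeSet_adj] at hadj
      have h1 : s(u, v) ∈ F := hadj.1
      refine ⟨s(u, v), mem_inter.2 ⟨h1, ?_⟩⟩
      rw [crossE, mem_filter]
      exact ⟨hF h1, ⟨u, hu, rfl⟩⟩
  · intro h v
    by_cases hv : v ∈ W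
    · exact Or.inl hv
    · obtain ⟨e, he⟩ := h v (mem_sdiff.2 ⟨mem_univ v, hv⟩)
      rw [mem_inter] at he
      obtain ⟨heF, heA⟩ := he
      rw [crossE, mem_filter] at heA
      obtain ⟨heE, u, hu, rfl⟩ := heA
      refine Or.inr ⟨u, hu, ?_⟩
      rw [SimpleGraph.fromEdgeSet_adj]
      have hadj : G.Adj u v := G.mem_edgeSet.mp (SimpleGraph.mem_edgeFinset.mp heE)
      exact ⟨heF, hadj.ne⟩

open scoped Classical in
lemma innerSumEval (W : Finset V) :
    ∑ F ∈ G.edgeFinset.powerset, (-1 : Polynomial ℤ) ^ F.card *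
        (if dominates (SimpleGraph.fromEdgeSet (↑F : Set (Sym2 V))) W then 1 else 0)
      = ∑ T ∈ (Finset.univ \ W).powerset.filter
            (fun T => G.edgeFinset ⊆ T.biUnion (crossE G W)),
          (-1 : Polynomial ℤ) ^ T.card := by
  classical
  have step1 : ∑ F ∈ G.edgeFinset.powerset, (-1 : Polynomial ℤ) ^ F.card *
        (if dominates (SimpleGraph.fromEdgeSet (↑F : Set (Sym2 V))) W then 1 else 0)
      = ∑ F ∈ G.edgeFinset.powerset, ∑ T ∈ (Finset.univ \ W).powerset,
          (if ∀ v ∈ T, F ∩ crossE G W v = ∅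
            then (-1 : Polynomial ℤ) ^ F.card * (-1 : Polynomial ℤ) ^ T.card else 0) := by
    refine sum_congr rfl fun F hF => ?_
    rw [mem_powerset] at hF
    have hdom : (if dominates (SimpleGraph.fromEdgeSet (↑F : Set (Sym2 V))) W
        then (1 : Polynomial ℤ) else 0)
        = if ((Finset.univ \ W).filter (fun v => F ∩ crossE G W v = ∅)) = ∅ then 1 else 0 := by
      refine if_congr ?_ rfl rfl
      rw [dom_iff G W F hF, Finset.filter_eq_empty_iff]
      simp [Finset.nonempty_iff_ne_empty]
    rw [hdom, ← alt_sum_poly]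
    have hps : ((Finset.univ \ W).filter (fun v => F ∩ crossE G W v = ∅)).powerset
        = (Finset.univ \ W).powerset.filter (fun T => ∀ v ∈ T, F ∩ crossE G W v = ∅) := by
      ext T
      simp only [mem_powerset, mem_filter]
      constructor
      · intro h
        exact ⟨fun x hx => (mem_filter.mp (h hx)).1, fun x hx => (mem_filter.mp (h hx)).2⟩
      · rintro ⟨h1, h2⟩ x hx
        exact mem_filter.mpr ⟨h1 hx, h2 x hx⟩
    rw [hps, mul_sum, sum_filter]
  rw [step1, Finset.sum_comm, sum_filter]
  refine sum_congr rfl fun T hT => ?_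
  rw [mem_powerset] at hT
  have hset : G.edgeFinset.powerset.filter (fun F => ∀ v ∈ T, F ∩ crossE G W v = ∅)
      = (G.edgeFinset \ T.biUnion (crossE G W)).powerset := by
    ext F
    simp only [mem_powerset, mem_filter, Finset.subset_sdiff,
      Finset.disjoint_biUnion_right, ← Finset.disjoint_iff_inter_eq_empty]
  have hterm : ∀ F, (if ∀ v ∈ T, F ∩ crossE G W v = ∅
        then (-1 : Polynomial ℤ) ^ F.card * (-1 : Polynomial ℤ) ^ T.card else 0)
      = (if ∀ v ∈ T, F ∩ crossE G W v = ∅ then (-1 : Polynomial ℤ) ^ F.card else 0)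
          * (-1 : Polynomial ℤ) ^ T.card := by
    intro F; split <;> simp
  calc ∑ F ∈ G.edgeFinset.powerset, (if ∀ v ∈ T, F ∩ crossE G W v = ∅
        then (-1 : Polynomial ℤ) ^ F.card * (-1 : Polynomial ℤ) ^ T.card else 0)
      = (∑ F ∈ (G.edgeFinset \ T.biUnion (crossE G W)).powerset,
          (-1 : Polynomial ℤ) ^ F.card) * (-1 : Polynomial ℤ) ^ T.card := by
        simp only [hterm]
        rw [← sum_mul, ← sum_filter, hset]
    _ = (if G.edgeFinset ⊆ T.biUnion (crossE G W) then (-1 : Polynomial ℤ) ^ T.card else 0) := by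
        rw [alt_sum_poly]
        simp only [Finset.sdiff_eq_empty_iff_subset]
        split <;> simp

lemma exists_adj (hConn : G.Connected) (hnt : ∀ v : V, ∃ w, w ≠ v) :
    ∀ v : V, ∃ u, G.Adj u v := by
  intro v
  obtain ⟨w, hw⟩ := hnt v
  obtain ⟨p⟩ := hConn.preconnected v w
  cases p with
  | nil => exact absurd rfl hw
  | cons h q => exact ⟨_, h.symm⟩

lemma cval_side (Y Z : Finset V) (hY : Y.Nonempty) (hZ : Z.Nonempty)
    (hUnion : Y ∪ Z = Finset.univ) (hDisj : Disjoint Y Z)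
    (hBip : ∀ u v : V, G.Adj u v → (u ∈ Y ∧ v ∈ Z) ∨ (u ∈ Z ∧ v ∈ Y))
    (hConn : G.Connected) :
    ∑ T ∈ (Finset.univ \ Y).powerset.filter
        (fun T => G.edgeFinset ⊆ T.biUnion (crossE G Y)),
      (-1 : Polynomial ℤ) ^ T.card = (-1 : Polynomial ℤ) ^ Z.card := by
  classical
  have hZeq : Finset.univ \ Y = Z := by
    ext v
    have hv : v ∈ Y ∪ Z := by rw [hUnion]; exact mem_univ v
    rw [mem_union] at hv
    have hd : v ∈ Y → v ∉ Z := fun h => Finset.disjoint_left.mp hDisj h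
    simp only [mem_sdiff, mem_univ, true_and]
    tauto
  have hnt : ∀ v : V, ∃ w, w ≠ v := by
    intro v
    by_cases hv : v ∈ Y
    · obtain ⟨z, hz⟩ := hZ
      exact ⟨z, fun h => (Finset.disjoint_left.mp hDisj hv) (h ▸ hz)⟩
    · obtain ⟨y, hy⟩ := hY
      exact ⟨y, fun h => hv (h ▸ hy)⟩
  have hfilter : (Finset.univ \ Y).powerset.filter
      (fun T => G.edgeFinset ⊆ T.biUnion (crossE G Y)) = {Z} := by
    ext T
    simp only [mem_filter, mem_powerset, mem_singleton, hZeq]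
    constructor
    · rintro ⟨hTZ, hcov⟩
      refine Finset.Subset.antisymm hTZ ?_
      intro v hv
      obtain ⟨u, hadj⟩ := exists_adj G hConn hnt v
      have huY : u ∈ Y := by
        rcases hBip u v hadj with ⟨h1, h2⟩ | ⟨h1, h2⟩
        · exact h1
        · exact absurd hv (Finset.disjoint_left.mp hDisj h2)
      have hmem : s(u, v) ∈ G.edgeFinset :=
        SimpleGraph.mem_edgeFinset.mpr (G.mem_edgeSet.mpr hadj)
      have hbu := hcov hmem
      rw [mem_biUnion] at hbu
      obtain ⟨v', hv', he⟩ := hbu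
      rw [crossE, mem_filter] at he
      obtain ⟨-, u', hu', heq⟩ := he
      rcases Sym2.eq_iff.mp heq with ⟨h1, h2⟩ | ⟨h1, h2⟩
      · exact h2 ▸ hv'
      · exact absurd (hTZ (h1 ▸ hv')) (Finset.disjoint_left.mp hDisj huY)
    · rintro rfl
      refine ⟨Finset.Subset.refl _, ?_⟩
      intro e
      induction e with
      | _ a b =>
        intro he
        have hadj : G.Adj a b := G.mem_edgeSet.mp (SimpleGraph.mem_edgeFinset.mp he)
        rcases hBip a b hadj with ⟨h1, h2⟩ | ⟨h1, h2⟩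
        · exact mem_biUnion.2 ⟨b, h2, mem_filter.2 ⟨he, a, h1, rfl⟩⟩
        · exact mem_biUnion.2 ⟨a, h1, mem_filter.2 ⟨he, b, h2, Sym2.eq_swap⟩⟩
  rw [hfilter, sum_singleton]

lemma cval_zero (Y Z W : Finset V) (hY : Y.Nonempty) (hZ : Z.Nonempty)
    (hUnion : Y ∪ Z = Finset.univ) (hDisj : Disjoint Y Z)
    (hBip : ∀ u v : V, G.Adj u v → (u ∈ Y ∧ v ∈ Z) ∨ (u ∈ Z ∧ v ∈ Y))
    (hConn : G.Connected) (hW1 : W ≠ Y) (hW2 : W ≠ Z) :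
    ∑ T ∈ (Finset.univ \ W).powerset.filter
        (fun T => G.edgeFinset ⊆ T.biUnion (crossE G W)),
      (-1 : Polynomial ℤ) ^ T.card = 0 := by
  classical
  have hemp : (Finset.univ \ W).powerset.filter
      (fun T => G.edgeFinset ⊆ T.biUnion (crossE G W)) = ∅ := by
    rw [Finset.eq_empty_iff_forall_notMem]
    intro T hT
    rw [mem_filter, mem_powerset] at hT
    obtain ⟨hTD, hcov⟩ := hT
    have hWalt : ∀ a b : V, G.Adj a b → (a ∈ W ↔ b ∉ W) := by
      intro a b hadj
      have he : s(a, b) ∈ G.edgeFinset :=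
        SimpleGraph.mem_edgeFinset.mpr (G.mem_edgeSet.mpr hadj)
      have hbu := hcov he
      rw [mem_biUnion] at hbu
      obtain ⟨v, hvT, hmem⟩ := hbu
      have hvW : v ∉ W := (mem_sdiff.mp (hTD hvT)).2
      rw [crossE, mem_filter] at hmem
      obtain ⟨-, u, huW, heq⟩ := hmem
      rcases Sym2.eq_iff.mp heq with ⟨h1, h2⟩ | ⟨h1, h2⟩
      · subst h1; subst h2; tauto
      · subst h1; subst h2; tauto
    have hpar : ∀ a b : V, G.Walk a b → ((a ∈ W ↔ b ∈ W) ↔ (a ∈ Y ↔ b ∈ Y)) := by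
      intro a b p
      induction p with
      | nil => tauto
      | cons hadj q ih =>
        have h1 := hWalt _ _ hadj
        rcases hBip _ _ hadj with ⟨hh1, hh2⟩ | ⟨hh1, hh2⟩
        · have hh3 := Finset.disjoint_right.mp hDisj hh2
          tauto
        · have hh3 := Finset.disjoint_right.mp hDisj hh1
          tauto
    obtain ⟨y, hy⟩ := hY
    have key : ∀ v, ((y ∈ W ↔ v ∈ W) ↔ v ∈ Y) := by
      intro v
      obtain ⟨p⟩ := hConn.preconnected y v
      have := hpar y v p
      tauto
    by_cases hyW : y ∈ W
    · refine hW1 (Finset.ext fun v => ?_)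
      have := key v
      tauto
    · refine hW2 (Finset.ext fun v => ?_)
      have hv : v ∈ Y ∪ Z := by rw [hUnion]; exact mem_univ v
      rw [mem_union] at hv
      have hd : v ∈ Y → v ∉ Z := fun h => Finset.disjoint_left.mp hDisj h
      have := key v
      tauto
  rw [hemp, sum_empty]

end Aux

/-- alternating sum of domination polynomials of spanning subgraphs of a
connected bipartite graph. -/
theorem stmt_1 [Fintype V] [DecidableEq V] (G : SimpleGraph V) [DecidableRel G.Adj]
    (Y Z : Finset V) (hY : Y.Nonempty) (hZ : Z.Nonempty)
    (hUnion : Y ∪ Z = Finset.univ) (hDisj : Disjoint Y Z)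
    (hBip : ∀ u v : V, G.Adj u v → (u ∈ Y ∧ v ∈ Z) ∨ (u ∈ Z ∧ v ∈ Y))
    (hConn : G.Connected) :
    ∑ F ∈ G.edgeFinset.powerset,
        (-1 : Polynomial ℤ) ^ F.card * domPoly (SimpleGraph.fromEdgeSet (↑F : Set (Sym2 V)))
      = (-1 : Polynomial ℤ) ^ Y.card * X ^ Z.card
        + (-1 : Polynomial ℤ) ^ Z.card * X ^ Y.card := by
  classical
  have hYZ : Y ≠ Z := by
    intro h
    obtain ⟨y, hy⟩ := hY
    exact Finset.disjoint_left.mp hDisj hy (h ▸ hy)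
  have hBip' : ∀ u v : V, G.Adj u v → (u ∈ Z ∧ v ∈ Y) ∨ (u ∈ Y ∧ v ∈ Z) :=
    fun u v h => (hBip u v h).symm
  have step1 : ∑ F ∈ G.edgeFinset.powerset,
        (-1 : Polynomial ℤ) ^ F.card * domPoly (SimpleGraph.fromEdgeSet (↑F : Set (Sym2 V)))
      = ∑ W ∈ (Finset.univ : Finset V).powerset,
          (∑ F ∈ G.edgeFinset.powerset, (-1 : Polynomial ℤ) ^ F.card *
            (if dominates (SimpleGraph.fromEdgeSet (↑F : Set (Sym2 V))) W then 1 else 0))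
            * X ^ W.card := by
    have e1 : ∀ F : Finset (Sym2 V), (-1 : Polynomial ℤ) ^ F.card *
          domPoly (SimpleGraph.fromEdgeSet (↑F : Set (Sym2 V)))
        = ∑ W ∈ (Finset.univ : Finset V).powerset,
            ((-1 : Polynomial ℤ) ^ F.card *
              (if dominates (SimpleGraph.fromEdgeSet (↑F : Set (Sym2 V))) W then 1 else 0))
              * X ^ W.card := by
      intro F
      rw [domPoly, sum_filter, mul_sum]
      refine sum_congr rfl fun W _ => ?_
      by_cases h : dominates (SimpleGraph.fromEdgeSet (↑F : Set (Sym2 V))) W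
      · simp [h]
      · simp [h]
    rw [Finset.sum_congr rfl (fun F _ => e1 F), Finset.sum_comm]
    exact sum_congr rfl fun W _ => (Finset.sum_mul _ _ _).symm
  rw [step1]
  have step2 : ∀ W ∈ (Finset.univ : Finset V).powerset,
      (∑ F ∈ G.edgeFinset.powerset, (-1 : Polynomial ℤ) ^ F.card *
        (if dominates (SimpleGraph.fromEdgeSet (↑F : Set (Sym2 V))) W then 1 else 0))
        * X ^ W.card
      = (if W = Y then (-1 : Polynomial ℤ) ^ Z.card else
          if W = Z then (-1 : Polynomial ℤ) ^ Y.card else 0) * X ^ W.card := by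
    intro W _
    rw [innerSumEval]
    congr 1
    by_cases h1 : W = Y
    · subst h1
      rw [if_pos rfl]
      exact cval_side G W Z hY hZ hUnion hDisj hBip hConn
    · by_cases h2 : W = Z
      · subst h2
        rw [if_neg h1, if_pos rfl]
        refine cval_side G W Y hZ hY ?_ hDisj.symm hBip' hConn
        rw [Finset.union_comm]; exact hUnion
      · rw [if_neg h1, if_neg h2]
        exact cval_zero G Y Z W hY hZ hUnion hDisj hBip hConn h1 h2
  rw [Finset.sum_congr rfl step2]
  rw [← Finset.sum_subset (s₁ := ({Y, Z} : Finset (Finset V)))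
      (by intro W _; exact mem_powerset.mpr (subset_univ W)) ?_]
  · rw [Finset.sum_pair hYZ, if_pos rfl, if_neg (Ne.symm hYZ), if_pos rfl]
    ring
  · intro W _ hW
    simp only [mem_insert, mem_singleton, not_or] at hW
    rw [if_neg hW.1, if_neg hW.2, zero_mul]
end

section
/- Let G = (V,E) be a graph. Then ∑_{F ⊆ E} (−1)^{|F|} D((V,F), x) ≠ 0 (as a polynomial in x) if and only if G is bipartite. -/
open Finset Polynomial

section aux
variable {α β : Type*} [DecidableEq α]

lemma sum_powerset_union' {M : Type*} [AddCommMonoid M] (s t : Finset α) (f : Finset α → M) :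
    Disjoint s t →
    ∑ u ∈ (s ∪ t).powerset, f u = ∑ a ∈ s.powerset, ∑ b ∈ t.powerset, f (a ∪ b) := by
  induction s using Finset.induction_on generalizing f with
  | empty => intro _; simp
  | @insert x s hx ih =>
    intro h
    have hd : Disjoint s t := (Finset.disjoint_insert_left.mp h).2
    have hxt : x ∉ t := (Finset.disjoint_insert_left.mp h).1
    have hxst : x ∉ s ∪ t := by simp [hx, hxt]
    rw [insert_union, Finset.sum_powerset_insert hxst, ih f hd, ih (fun u => f (insert x u)) hd,
      Finset.sum_powerset_insert hx]
    congr 1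
    refine Finset.sum_congr rfl fun a _ => Finset.sum_congr rfl fun b _ => ?_
    rw [insert_union]

lemma sum_powerset_nonempty (s : Finset α) :
    ∑ a ∈ s.powerset, (-1 : ℤ) ^ a.card * (if a.Nonempty then 1 else 0)
      = if s.Nonempty then -1 else 0 := by
  have h1 : ∀ a : Finset α, (-1 : ℤ) ^ a.card * (if a.Nonempty then 1 else 0)
      = (-1 : ℤ) ^ a.card - (if a = ∅ then (-1 : ℤ) ^ a.card else 0) := by
    intro a
    rcases eq_or_ne a ∅ with h | h
    · simp [h]
    · simp [h, Finset.nonempty_iff_ne_empty.mpr h]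
  rw [Finset.sum_congr rfl fun a _ => h1 a, Finset.sum_sub_distrib,
    Finset.sum_ite_eq' s.powerset ∅ (fun a => (-1 : ℤ) ^ a.card),
    if_pos (Finset.empty_mem_powerset s), Finset.sum_powerset_neg_one_pow_card]
  rcases eq_or_ne s ∅ with h | h
  · simp [h]
  · simp [h, Finset.nonempty_iff_ne_empty.mpr h]

lemma key_lemma [DecidableEq β] (S : Finset β) (A : β → Finset α) :
    (↑S : Set β).PairwiseDisjoint A →
    ∑ F ∈ (S.biUnion A).powerset,
        (-1 : ℤ) ^ F.card * (if ∀ v ∈ S, (F ∩ A v).Nonempty then 1 else 0)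
      = ∏ v ∈ S, (if (A v).Nonempty then (-1 : ℤ) else 0) := by
  induction S using Finset.induction_on with
  | empty => intro _; simp
  | @insert x S hx ih =>
    intro hd
    have hd' : (↑S : Set β).PairwiseDisjoint A :=
      hd.subset (by simp [Set.subset_insert])
    have hdis : Disjoint (A x) (S.biUnion A) := by
      rw [Finset.disjoint_biUnion_right]
      intro v hv
      exact hd (by simp) (by simp [hv]) (fun h => hx (h ▸ hv))
    rw [Finset.biUnion_insert, sum_powerset_union' _ _ _ hdis]
    have step : ∀ a ∈ (A x).powerset, ∀ b ∈ (S.biUnion A).powerset,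
        (-1 : ℤ) ^ (a ∪ b).card * (if ∀ v ∈ insert x S, ((a ∪ b) ∩ A v).Nonempty then 1 else 0)
        = ((-1 : ℤ) ^ a.card * (if a.Nonempty then 1 else 0)) *
          ((-1 : ℤ) ^ b.card * (if ∀ v ∈ S, (b ∩ A v).Nonempty then 1 else 0)) := by
      intro a ha b hb
      rw [Finset.mem_powerset] at ha hb
      have hab : Disjoint a b := hdis.mono ha hb
      have hax : (a ∪ b) ∩ A x = a := by
        ext e
        simp only [Finset.mem_inter, Finset.mem_union]
        constructor
        · rintro ⟨h | h, hAx⟩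
          · exact h
          · exact absurd hAx (Finset.disjoint_right.mp hdis (hb h))
        · intro h
          exact ⟨Or.inl h, ha h⟩
      have hav : ∀ v ∈ S, (a ∪ b) ∩ A v = b ∩ A v := by
        intro v hv
        have hav' : Disjoint a (A v) := Finset.disjoint_left.mpr fun e he hev =>
          Finset.disjoint_left.mp hdis (ha he) (Finset.mem_biUnion.mpr ⟨v, hv, hev⟩)
        ext e
        simp only [Finset.mem_inter, Finset.mem_union]
        constructor
        · rintro ⟨h | h, hAv⟩
          · exact absurd hAv (Finset.disjoint_left.mp hav' h)
          · exact ⟨h, hAv⟩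
        · intro h
          exact ⟨Or.inr h.1, h.2⟩
      rw [Finset.card_union_of_disjoint hab, pow_add]
      have hcond : (∀ v ∈ insert x S, ((a ∪ b) ∩ A v).Nonempty)
          ↔ (a.Nonempty ∧ ∀ v ∈ S, (b ∩ A v).Nonempty) := by
        constructor
        · intro h
          refine ⟨hax ▸ h x (Finset.mem_insert_self x S), fun v hv => ?_⟩
          exact hav v hv ▸ h v (Finset.mem_insert_of_mem hv)
        · rintro ⟨h1, h2⟩ v hv
          rcases Finset.mem_insert.mp hv with rfl | hv
          · rwa [hax]
          · rw [hav v hv]; exact h2 v hv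
      rw [if_congr hcond rfl rfl]
      by_cases h1 : a.Nonempty <;> by_cases h2 : ∀ v ∈ S, (b ∩ A v).Nonempty <;>
        simp [h1, h2] <;> ring
    rw [Finset.sum_congr rfl fun a ha => Finset.sum_congr rfl fun b hb => step a ha b hb]
    rw [← Finset.sum_mul_sum, ih hd', sum_powerset_nonempty, Finset.prod_insert hx]

end aux

variable {V : Type*}

section graph
variable [Fintype V] [DecidableEq V] (G : SimpleGraph V) [DecidableRel G.Adj] (W : Finset V)

def Aset (v : V) : Finset (Sym2 V) := (W.filter (fun u => G.Adj u v)).image (fun u => s(u, v))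

omit [Fintype V] in
lemma mem_Aset {v : V} {e : Sym2 V} :
    e ∈ Aset G W v ↔ ∃ u ∈ W, G.Adj u v ∧ e = s(u, v) := by
  simp only [Aset, Finset.mem_image, Finset.mem_filter]
  constructor
  · rintro ⟨u, ⟨hu, ha⟩, rfl⟩; exact ⟨u, hu, ha, rfl⟩
  · rintro ⟨u, hu, ha, rfl⟩; exact ⟨u, ⟨hu, ha⟩, rfl⟩

lemma Aset_subset (v : V) : Aset G W v ⊆ G.edgeFinset := by
  intro e he
  obtain ⟨u, _, ha, rfl⟩ := (mem_Aset G W).mp he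
  exact SimpleGraph.mem_edgeFinset.mpr ha

omit [Fintype V] in
lemma Aset_disjoint {v v' : V} (hv : v ∉ W) (hv' : v' ∉ W) (hne : v ≠ v') :
    Disjoint (Aset G W v) (Aset G W v') := by
  rw [Finset.disjoint_left]
  intro e he he'
  obtain ⟨u, hu, _, rfl⟩ := (mem_Aset G W).mp he
  obtain ⟨u', hu', _, heq⟩ := (mem_Aset G W).mp he'
  rw [Sym2.eq_iff] at heq
  rcases heq with ⟨rfl, rfl⟩ | ⟨rfl, rfl⟩
  · exact hne rfl
  · exact hv hu'

lemma dominates_iff {F : Finset (Sym2 V)} (hF : F ⊆ G.edgeFinset) :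
    dominates (SimpleGraph.fromEdgeSet (↑F : Set (Sym2 V))) W
      ↔ ∀ v ∈ Finset.univ \ W, (F ∩ Aset G W v).Nonempty := by
  constructor
  · intro h v hv
    rw [Finset.mem_sdiff] at hv
    rcases h v with hvW | ⟨u, hu, hadj⟩
    · exact absurd hvW hv.2
    · rw [SimpleGraph.fromEdgeSet_adj] at hadj
      have hmem : s(u, v) ∈ F := hadj.1
      have hGadj : G.Adj u v := SimpleGraph.mem_edgeFinset.mp (hF hmem)
      exact ⟨s(u, v), Finset.mem_inter.mpr ⟨hmem, (mem_Aset G W).mpr ⟨u, hu, hGadj, rfl⟩⟩⟩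
  · intro h v
    by_cases hvW : v ∈ W
    · exact Or.inl hvW
    · obtain ⟨e, he⟩ := h v (Finset.mem_sdiff.mpr ⟨Finset.mem_univ v, hvW⟩)
      rw [Finset.mem_inter] at he
      obtain ⟨u, hu, hGadj, rfl⟩ := (mem_Aset G W).mp he.2
      exact Or.inr ⟨u, hu, (SimpleGraph.fromEdgeSet_adj _).mpr ⟨he.1, hGadj.ne⟩⟩

def Across : Finset (Sym2 V) := (Finset.univ \ W).biUnion (Aset G W)

def GoodW : Prop :=
  G.edgeFinset \ Across G W = ∅ ∧ ∀ v ∈ Finset.univ \ W, (Aset G W v).Nonempty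

open scoped Classical in
noncomputable def cval : ℤ :=
  ∑ F ∈ G.edgeFinset.powerset,
    (-1 : ℤ) ^ F.card *
      (if dominates (SimpleGraph.fromEdgeSet (↑F : Set (Sym2 V))) W then 1 else 0)

open scoped Classical in
lemma cval_eq : cval G W = if GoodW G W then (-1 : ℤ) ^ ((Finset.univ \ W).card) else 0 := by
  have h1 : cval G W = ∑ F ∈ G.edgeFinset.powerset, (-1 : ℤ) ^ F.card *
      (if ∀ v ∈ Finset.univ \ W, (F ∩ Aset G W v).Nonempty then 1 else 0) := by
    rw [cval]
    refine Finset.sum_congr rfl fun F hF => ?_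
    rw [Finset.mem_powerset] at hF
    rw [if_congr (dominates_iff G W hF) rfl rfl]
  rw [h1]
  have hsub : Across G W ⊆ G.edgeFinset :=
    Finset.biUnion_subset.mpr fun v _ => Aset_subset G W v
  have hunion : G.edgeFinset = (G.edgeFinset \ Across G W) ∪ Across G W :=
    (Finset.sdiff_union_of_subset hsub).symm
  have hdisj : Disjoint (G.edgeFinset \ Across G W) (Across G W) := Finset.sdiff_disjoint
  rw [hunion, sum_powerset_union' _ _ _ hdisj]
  have step : ∀ b ∈ (G.edgeFinset \ Across G W).powerset, ∀ a ∈ (Across G W).powerset,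
      (-1 : ℤ) ^ ((b ∪ a).card) *
        (if ∀ v ∈ Finset.univ \ W, ((b ∪ a) ∩ Aset G W v).Nonempty then 1 else 0)
      = (-1 : ℤ) ^ b.card * ((-1 : ℤ) ^ a.card *
        (if ∀ v ∈ Finset.univ \ W, (a ∩ Aset G W v).Nonempty then 1 else 0)) := by
    intro b hb a ha
    rw [Finset.mem_powerset] at hb ha
    have hab : Disjoint b a := hdisj.mono hb ha
    have hbA : ∀ v ∈ Finset.univ \ W, (b ∪ a) ∩ Aset G W v = a ∩ Aset G W v := by
      intro v hv
      have hbv : Disjoint b (Aset G W v) := by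
        refine Finset.disjoint_left.mpr fun e he hev => ?_
        have : e ∈ Across G W := Finset.mem_biUnion.mpr ⟨v, hv, hev⟩
        exact (Finset.mem_sdiff.mp (hb he)).2 this
      ext e
      simp only [Finset.mem_inter, Finset.mem_union]
      constructor
      · rintro ⟨h | h, hA⟩
        · exact absurd hA (Finset.disjoint_left.mp hbv h)
        · exact ⟨h, hA⟩
      · intro h; exact ⟨Or.inr h.1, h.2⟩
    have hcond : (∀ v ∈ Finset.univ \ W, ((b ∪ a) ∩ Aset G W v).Nonempty)
        ↔ (∀ v ∈ Finset.univ \ W, (a ∩ Aset G W v).Nonempty) := by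
      constructor
      · intro h v hv; rw [← hbA v hv]; exact h v hv
      · intro h v hv; rw [hbA v hv]; exact h v hv
    rw [Finset.card_union_of_disjoint hab, pow_add, if_congr hcond rfl rfl, mul_assoc]
  rw [Finset.sum_congr rfl fun b hb => Finset.sum_congr rfl fun a ha => step b hb a ha]
  rw [← Finset.sum_mul_sum, Finset.sum_powerset_neg_one_pow_card]
  have hpd : (↑(Finset.univ \ W) : Set V).PairwiseDisjoint (Aset G W) := by
    intro v hv v' hv' hne
    simp only [Finset.coe_sdiff, Set.mem_diff, Finset.mem_coe, Finset.coe_univ,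
      Set.mem_univ, true_and] at hv hv'
    exact Aset_disjoint G W hv hv' hne
  have hkey := key_lemma (Finset.univ \ W) (Aset G W) hpd
  have hkey2 : (∑ F ∈ (Across G W).powerset,
        (-1 : ℤ) ^ F.card *
          (if ∀ v ∈ Finset.univ \ W, (F ∩ Aset G W v).Nonempty then 1 else 0))
      = ∏ v ∈ Finset.univ \ W, (if (Aset G W v).Nonempty then (-1 : ℤ) else 0) := by
    rw [← hkey]
    refine Finset.sum_congr rfl fun F _ => ?_
    congr 1
    by_cases h : ∀ v ∈ Finset.univ \ W, (F ∩ Aset G W v).Nonempty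
    · rw [if_pos h, if_pos h]
    · rw [if_neg h, if_neg h]
  rw [hkey2]
  by_cases hB : G.edgeFinset \ Across G W = ∅
  · by_cases hall : ∀ v ∈ Finset.univ \ W, (Aset G W v).Nonempty
    · rw [if_pos hB, if_pos ⟨hB, hall⟩, one_mul,
        Finset.prod_congr rfl (fun v hv => if_pos (hall v hv)), Finset.prod_const]
    · push_neg at hall
      obtain ⟨v, hv, hempty⟩ := hall
      rw [if_neg (fun h : GoodW G W => absurd (h.2 v hv) (Finset.not_nonempty_iff_eq_empty.mpr hempty)),
        Finset.prod_eq_zero hv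
          (if_neg (Finset.not_nonempty_iff_eq_empty.mpr hempty) : (if (Aset G W v).Nonempty then (-1 : ℤ) else 0) = 0), mul_zero]
  · rw [if_neg hB, if_neg (fun h : GoodW G W => hB h.1), zero_mul]


lemma good_imp_colorable (h : ∃ W : Finset V, GoodW G W) : G.Colorable 2 := by
  obtain ⟨W, hB, hall⟩ := h
  refine ⟨SimpleGraph.Coloring.mk (fun v => if v ∈ W then (0 : Fin 2) else 1) ?_⟩
  intro a b hadj hcc
  have hE : s(a, b) ∈ Across G W := by
    by_contra hn
    exact Finset.eq_empty_iff_forall_notMem.mp hB s(a, b)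
      (Finset.mem_sdiff.mpr ⟨SimpleGraph.mem_edgeFinset.mpr hadj, hn⟩)
  obtain ⟨w, hw, he⟩ := Finset.mem_biUnion.mp hE
  obtain ⟨u, hu, _, heq⟩ := (mem_Aset G W).mp he
  have hwW : w ∉ W := (Finset.mem_sdiff.mp hw).2
  rw [Sym2.eq_iff] at heq
  rcases heq with ⟨rfl, rfl⟩ | ⟨rfl, rfl⟩
  · simp only [if_pos hu, if_neg hwW] at hcc
    exact absurd hcc (by decide)
  · simp only [if_neg hwW, if_pos hu] at hcc
    exact absurd hcc (by decide)

lemma colorable_imp_good (h : G.Colorable 2) : ∃ W : Finset V, GoodW G W := by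
  obtain ⟨Cc⟩ := h
  have h2 : ∀ x : Fin 2, x = 0 ∨ x = 1 := by decide
  refine ⟨Finset.univ.filter (fun v => Cc v = 0 ∨ ∀ u, ¬ G.Adj u v), ?_, ?_⟩
  · set W := Finset.univ.filter (fun v => Cc v = 0 ∨ ∀ u, ¬ G.Adj u v) with hWdef
    rw [Finset.sdiff_eq_empty_iff_subset]
    intro e he
    induction e using Sym2.ind with
    | _ a b =>
      have hadj : G.Adj a b := SimpleGraph.mem_edgeFinset.mp he
      have hCab : Cc a ≠ Cc b := Cc.valid hadj
      have main : ∀ u v : V, G.Adj u v → Cc u = 0 → Cc v = 1 → s(u, v) ∈ Across G W := by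
        intro u v huv hu0 hv1
        have huW : u ∈ W := Finset.mem_filter.mpr ⟨Finset.mem_univ u, Or.inl hu0⟩
        have hvW : v ∉ W := by
          rw [hWdef, Finset.mem_filter]
          push_neg
          exact fun _ => ⟨by rw [hv1]; decide, ⟨u, huv⟩⟩
        exact Finset.mem_biUnion.mpr ⟨v, Finset.mem_sdiff.mpr ⟨Finset.mem_univ v, hvW⟩,
          (mem_Aset G W).mpr ⟨u, huW, huv, rfl⟩⟩
      rcases h2 (Cc a) with ha | ha <;> rcases h2 (Cc b) with hb | hb
      · exact absurd (ha.trans hb.symm) hCab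
      · exact main a b hadj ha hb
      · rw [Sym2.eq_swap]; exact main b a hadj.symm hb ha
      · exact absurd (ha.trans hb.symm) hCab
  · set W := Finset.univ.filter (fun v => Cc v = 0 ∨ ∀ u, ¬ G.Adj u v) with hWdef
    intro v hv
    have hvW : v ∉ W := (Finset.mem_sdiff.mp hv).2
    rw [hWdef, Finset.mem_filter] at hvW
    push_neg at hvW
    obtain ⟨hv0, u, hadj⟩ := hvW (Finset.mem_univ v)
    have hv1 : Cc v = 1 := (h2 (Cc v)).resolve_left hv0
    have hu0 : Cc u = 0 := by
      have hne : Cc u ≠ Cc v := Cc.valid hadj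
      rcases h2 (Cc u) with h | h
      · exact h
      · exact absurd (h.trans hv1.symm) hne
    have huW : u ∈ W := Finset.mem_filter.mpr ⟨Finset.mem_univ u, Or.inl hu0⟩
    exact ⟨s(u, v), (mem_Aset G W).mpr ⟨u, huW, hadj, rfl⟩⟩

end graph

open scoped Classical in
lemma sum_eq_cval [Fintype V] [DecidableEq V] (G : SimpleGraph V) [DecidableRel G.Adj] :
    (∑ F ∈ G.edgeFinset.powerset,
        (-1 : Polynomial ℤ) ^ F.card * domPoly (SimpleGraph.fromEdgeSet (↑F : Set (Sym2 V))))
      = ∑ W ∈ Finset.univ.powerset, C (cval G W) * X ^ W.card := by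
  have hdp : ∀ H : SimpleGraph V, domPoly H
      = ∑ W ∈ Finset.univ.powerset,
          (if dominates H W then (X : Polynomial ℤ) ^ W.card else 0) := by
    intro H
    simp only [domPoly]
    rw [Finset.sum_filter]
  rw [Finset.sum_congr rfl fun F _ => by rw [hdp, Finset.mul_sum]]
  rw [Finset.sum_comm]
  refine Finset.sum_congr rfl fun W _ => ?_
  simp only [cval]
  rw [map_sum, Finset.sum_mul]
  refine Finset.sum_congr rfl fun F _ => ?_
  by_cases h : dominates (SimpleGraph.fromEdgeSet (↑F : Set (Sym2 V))) W
  · simp only [if_pos h, mul_one, map_mul, map_pow, map_neg, map_one]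
  · simp only [if_neg h, mul_zero, map_zero, zero_mul]

/-- the alternating sum over spanning subgraphs is nonzero iff `G` is
bipartite (i.e. 2-colorable). -/
theorem stmt_3 [Fintype V] [DecidableEq V] (G : SimpleGraph V) [DecidableRel G.Adj] :
    (∑ F ∈ G.edgeFinset.powerset,
        (-1 : Polynomial ℤ) ^ F.card * domPoly (SimpleGraph.fromEdgeSet (↑F : Set (Sym2 V))))
      ≠ 0 ↔ G.Colorable 2 := by
  classical
  rw [sum_eq_cval G]
  constructor
  · intro hne
    by_contra hcol
    apply hne
    refine Finset.sum_eq_zero fun W _ => ?_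
    have hng : ¬ GoodW G W := fun hg => hcol (good_imp_colorable G ⟨W, hg⟩)
    rw [cval_eq, if_neg hng, map_zero, zero_mul]
  · intro hcol h0
    obtain ⟨W0, hW0⟩ := colorable_imp_good G hcol
    set n := Fintype.card V
    set k := W0.card with hk
    have hcoeff := congrArg (fun p => Polynomial.coeff p k) h0
    simp only [Polynomial.coeff_zero] at hcoeff
    rw [Polynomial.finset_sum_coeff] at hcoeff
    have hterm : ∀ W ∈ Finset.univ.powerset,
        (C (cval G W) * X ^ W.card).coeff k
          = if GoodW G W ∧ W.card = k then (-1 : ℤ) ^ (n - k) else 0 := by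
      intro W _
      rw [Polynomial.coeff_C_mul, Polynomial.coeff_X_pow, cval_eq]
      have hcard : (Finset.univ \ W).card = n - W.card := by
        rw [Finset.card_sdiff_of_subset (Finset.subset_univ W), Finset.card_univ]
      by_cases hg : GoodW G W <;> by_cases hck : W.card = k <;>
        simp [hg, hck, hcard, eq_comm] <;>
        exact fun h => absurd h.symm hck
    rw [Finset.sum_congr rfl hterm, ← Finset.sum_filter, Finset.sum_const,
      nsmul_eq_mul] at hcoeff
    have hmem : W0 ∈ (Finset.univ.powerset.filter (fun W => GoodW G W ∧ W.card = k)) :=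
      Finset.mem_filter.mpr ⟨Finset.mem_powerset.mpr (Finset.subset_univ W0), hW0, rfl⟩
    have hpos : ((Finset.univ.powerset.filter (fun W => GoodW G W ∧ W.card = k)).card : ℤ) ≠ 0 := by
      exact_mod_cast Finset.card_ne_zero_of_mem hmem
    exact (mul_ne_zero hpos (pow_ne_zero _ (by norm_num))) hcoeff
end

section
/- Let G = (V,E) be a graph and A ⊆ E an edge subset such that the spanning subgraph (V,A) contains an odd cycle. Then ∑_{F ⊆ A} (−1)^{|F|} D(G − F, x) = 0, where G − F denotes the graph (V, E ∖ F). -/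
open Finset Polynomial

variable {V : Type*}

private lemma walk_parity {V : Type*} [DecidableEq V] (H : SimpleGraph V) (W : Finset V)
    (hcross : ∀ x y : V, H.Adj x y → ¬((x ∈ W) ↔ (y ∈ W))) :
    ∀ {u v : V} (p : H.Walk u v),
      ((if u ∈ W then 1 else 0) + p.length : ZMod 2) = (if v ∈ W then 1 else 0) := by
  intro u v p
  induction p with
  | nil => simp
  | @cons u w v h p ih =>
    have hstep : ((if u ∈ W then 1 else 0) + 1 : ZMod 2) = (if w ∈ W then 1 else 0) := by
      have := hcross u w h
      by_cases hu : u ∈ W <;> by_cases hw : w ∈ W <;> simp_all <;> decide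
    calc ((if u ∈ W then 1 else 0) + (p.cons h).length : ZMod 2)
        = ((if u ∈ W then 1 else 0) + 1) + (p.length : ZMod 2) := by
          rw [SimpleGraph.Walk.length_cons]; push_cast; ring
      _ = (if w ∈ W then 1 else 0) + (p.length : ZMod 2) := by rw [hstep]
      _ = _ := ih

private lemma dom_congr {V : Type*} (G : SimpleGraph V) (W : Finset V)
    (F F' : Set (Sym2 V))
    (h : ∀ u v : V, u ∈ W → v ∉ W → (s(u,v) ∈ F ↔ s(u,v) ∈ F')) :
    dominates (G.deleteEdges F) W ↔ dominates (G.deleteEdges F') W := by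
  unfold dominates
  apply forall_congr'
  intro v
  by_cases hv : v ∈ W
  · simp [hv]
  · apply or_congr Iff.rfl
    apply exists_congr
    intro u
    by_cases hu : u ∈ W
    · simp only [hu, true_and, SimpleGraph.deleteEdges_adj]
      rw [h u v hu hv]
    · simp [hu]

/-- if the spanning subgraph `(V,A)` contains an odd cycle, then the
alternating sum of `D(G - F, x)` over `F ⊆ A` vanishes. -/
theorem stmt_4 [Fintype V] [DecidableEq V] (G : SimpleGraph V) [DecidableRel G.Adj]
    (A : Finset (Sym2 V)) (hA : ↑A ⊆ G.edgeSet)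
    (hodd : ∃ (v : V) (w : (SimpleGraph.fromEdgeSet (↑A : Set (Sym2 V))).Walk v v),
      w.IsCycle ∧ Odd w.length) :
    ∑ F ∈ A.powerset,
        (-1 : Polynomial ℤ) ^ F.card * domPoly (G.deleteEdges (↑F : Set (Sym2 V))) = 0 := by
  classical
  have key : ∀ W : Finset V,
      ∑ F ∈ A.powerset.filter (fun F : Finset (Sym2 V) => dominates (G.deleteEdges (↑F : Set (Sym2 V))) W),
        (-1 : Polynomial ℤ) ^ F.card = 0 := by
    intro W
    -- find a non-crossing edge of `A`
    obtain ⟨a, b, heA, hab, hside⟩ :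
        ∃ a b : V, s(a,b) ∈ A ∧ a ≠ b ∧ ((a ∈ W) ↔ (b ∈ W)) := by
      by_contra hc
      push_neg at hc
      obtain ⟨v, w, _hcyc, hoddl⟩ := hodd
      have hcross : ∀ x y : V, (SimpleGraph.fromEdgeSet (↑A : Set (Sym2 V))).Adj x y →
          ¬((x ∈ W) ↔ (y ∈ W)) := by
        intro x y hxy hiff
        rw [SimpleGraph.fromEdgeSet_adj] at hxy
        rcases hc x y hxy.1 hxy.2 with ⟨h1, h2⟩ | ⟨h1, h2⟩ <;> tauto
      have hp := walk_parity _ W hcross w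
      have h0 : (w.length : ZMod 2) = 0 := by
        have := hp
        rwa [add_eq_left] at this
      rw [ZMod.natCast_eq_zero_iff] at h0
      exact (Nat.not_even_iff_odd.mpr hoddl) (even_iff_two_dvd.mpr h0)
    -- the involution `F ↦ F toggle e`
    set e : Sym2 V := s(a,b) with he
    set s := A.powerset.filter (fun F : Finset (Sym2 V) => dominates (G.deleteEdges (↑F : Set (Sym2 V))) W) with hs
    have hne : ∀ u v : V, u ∈ W → v ∉ W → s(u,v) ≠ e := by
      intro u v hu hv hEq
      rw [he, Sym2.eq_iff] at hEq
      rcases hEq with ⟨h1, h2⟩ | ⟨h1, h2⟩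
      · exact hv (h2 ▸ hside.mp (h1 ▸ hu))
      · exact hv (h2 ▸ hside.mpr (h1 ▸ hu))
    have hmem : ∀ F ∈ s, (if e ∈ F then F.erase e else insert e F) ∈ s := by
      intro F hF
      rw [hs, Finset.mem_filter, Finset.mem_powerset] at hF ⊢
      obtain ⟨hFA, hFd⟩ := hF
      constructor
      · by_cases hEF : e ∈ F
        · simp only [hEF, if_true]
          exact (Finset.erase_subset e F).trans hFA
        · simp only [hEF, if_false]
          exact Finset.insert_subset heA hFA
      · rw [← dom_congr G W]
        · exact hFd
        · intro u v hu hv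
          have hne' := hne u v hu hv
          by_cases hEF : e ∈ F <;>
            simp [hEF, Finset.mem_erase, Finset.mem_insert, hne']
    apply Finset.sum_involution (fun F _ => if e ∈ F then F.erase e else insert e F)
    · intro F hF
      by_cases hEF : e ∈ F
      · simp only [hEF, if_true]
        rw [Finset.card_erase_of_mem hEF]
        have : F.card ≠ 0 := Finset.card_ne_zero_of_mem hEF
        obtain ⟨n, hn⟩ : ∃ n, F.card = n + 1 := ⟨F.card - 1, by omega⟩
        rw [hn]
        simp [pow_succ]
      · simp only [hEF, if_false]
        rw [Finset.card_insert_of_notMem hEF]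
        simp [pow_succ]
    · intro F hF _
      by_cases hEF : e ∈ F
      · simp only [hEF, if_true]
        intro hcon
        have := Finset.card_erase_of_mem hEF
        rw [hcon] at this
        have : F.card ≠ 0 := Finset.card_ne_zero_of_mem hEF
        omega
      · simp only [hEF, if_false]
        intro hcon
        have := Finset.card_insert_of_notMem hEF
        rw [hcon] at this
        omega
    · intro F hF
      by_cases hEF : e ∈ F
      · simp [hEF, Finset.insert_erase hEF]
      · simp [hEF, Finset.erase_insert hEF]
    · exact hmem
  calc ∑ F ∈ A.powerset, (-1 : Polynomial ℤ) ^ F.card * domPoly (G.deleteEdges (↑F : Set (Sym2 V)))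
      = ∑ F ∈ A.powerset, ∑ W ∈ Finset.univ.powerset,
          if dominates (G.deleteEdges (↑F : Set (Sym2 V))) W then
            (-1 : Polynomial ℤ) ^ F.card * X ^ W.card else 0 := by
        apply Finset.sum_congr rfl
        intro F _
        rw [domPoly, Finset.mul_sum, Finset.sum_filter]
    _ = ∑ W ∈ Finset.univ.powerset, ∑ F ∈ A.powerset,
          if dominates (G.deleteEdges (↑F : Set (Sym2 V))) W then
            (-1 : Polynomial ℤ) ^ F.card * X ^ W.card else 0 := Finset.sum_comm
    _ = ∑ W ∈ Finset.univ.powerset, (0 : Polynomial ℤ) := by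
        apply Finset.sum_congr rfl
        intro W _
        rw [← Finset.sum_filter, ← Finset.sum_mul, key W, zero_mul]
    _ = 0 := by simp
end

section
/- For any finite graph G, the number d(G) of dominating sets of G is odd. -/
open Finset Polynomial

variable {V : Type*}

open scoped Classical in
/-- the number of dominating sets of any finite graph is odd. -/
theorem stmt_5 [Fintype V] (G : SimpleGraph V) :
    Odd (Finset.univ.powerset.filter (fun W => dominates G W)).card := by
  classical
  -- closed neighborhood
  set N : Finset V → Finset V :=
    fun A => univ.filter (fun v => v ∈ A ∨ ∃ u ∈ A, G.Adj u v) with hNdef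
  set P : Finset (Finset V × Finset V) :=
    univ.filter (fun p => ∀ a ∈ p.1, ∀ b ∈ p.2, a ≠ b ∧ ¬ G.Adj a b) with hPdef
  have hmem : ∀ A B : Finset V,
      (A, B) ∈ P ↔ ∀ a ∈ A, ∀ b ∈ B, a ≠ b ∧ ¬ G.Adj a b := by
    intro A B; simp [hPdef]
  have hsub : ∀ A B : Finset V, (A, B) ∈ P ↔ B ⊆ univ \ N A := by
    intro A B
    rw [hmem]
    constructor
    · intro h b hb
      simp only [hNdef, mem_sdiff, mem_univ, mem_filter, true_and]
      push_neg
      refine ⟨fun hbA => (h b hbA b hb).1 rfl, fun u hu => (h u hu b hb).2⟩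
    · intro h a ha b hb
      have hb' := h hb
      simp only [hNdef, mem_sdiff, mem_univ, mem_filter, true_and] at hb'
      push_neg at hb'
      exact ⟨fun e => hb'.1 (e ▸ ha), hb'.2 a ha⟩
  -- counting P fiberwise over the first coordinate
  have hcard : P.card = ∑ A : Finset V, 2 ^ (univ \ N A).card := by
    rw [Finset.card_eq_sum_card_fiberwise
      (f := Prod.fst) (t := (univ : Finset (Finset V))) (fun _ _ => mem_univ _)]
    refine Finset.sum_congr rfl fun A _ => ?_
    rw [← Finset.card_powerset]
    have himg : P.filter (fun p => p.1 = A) =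
        (univ \ N A).powerset.image (fun B => (A, B)) := by
      ext ⟨A', B⟩
      simp only [mem_filter, mem_image, mem_powerset, Prod.mk.injEq]
      constructor
      · rintro ⟨hp, rfl⟩
        exact ⟨B, (hsub _ _).1 hp, rfl, rfl⟩
      · rintro ⟨B', hB', rfl, rfl⟩
        exact ⟨(hsub _ _).2 hB', rfl⟩
    rw [himg, Finset.card_image_of_injective _ (fun B C h => (Prod.ext_iff.1 h).2)]
  -- dominating sets are those with empty "undominated" part
  have hdom : ∀ A : Finset V, dominates G A ↔ univ \ N A = ∅ := by
    intro A
    rw [Finset.sdiff_eq_empty_iff_subset]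
    constructor
    · intro h v _
      simp only [hNdef, mem_filter, mem_univ, true_and]
      exact h v
    · intro h v
      have := h (mem_univ v)
      simpa only [hNdef, mem_filter, mem_univ, true_and] using this
  -- mod 2, |P| equals the number of dominating sets
  have hP2 : (P.card : ZMod 2) =
      ((Finset.univ.powerset.filter (fun W => dominates G W)).card : ZMod 2) := by
    rw [hcard, Finset.powerset_univ, Finset.card_filter]
    push_cast
    refine Finset.sum_congr rfl fun A _ => ?_
    by_cases hA : dominates G A
    · have h0 : (univ \ N A).card = 0 := by rw [(hdom A).1 hA]; simp
      simp [hA, h0]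
    · have h0 : (univ \ N A).card ≠ 0 :=
        fun h => hA ((hdom A).2 (Finset.card_eq_zero.1 h))
      have : (2 : ZMod 2) = 0 := by decide
      simp [hA, this, zero_pow h0]
  -- |P| is odd, by the swap involution
  have hdiag : P.filter (fun p => p.1 = p.2) = {((∅ : Finset V), (∅ : Finset V))} := by
    ext ⟨A, B⟩
    simp only [mem_filter, mem_singleton, Prod.mk.injEq]
    constructor
    · rintro ⟨hp, h⟩
      subst h
      have hA : A = ∅ := by
        by_contra hne
        obtain ⟨a, ha⟩ := Finset.nonempty_iff_ne_empty.2 hne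
        exact ((hmem A A).1 hp a ha a ha).1 rfl
      exact ⟨hA, hA⟩
    · rintro ⟨rfl, rfl⟩
      exact ⟨(hmem _ _).2 (by simp), rfl⟩
  have hswap : ∀ p : Finset V × Finset V, p ∈ P → p.swap ∈ P := by
    rintro ⟨A, B⟩ hp
    refine (hmem B A).2 fun b hb a ha => ?_
    obtain ⟨h1, h2⟩ := (hmem A B).1 hp a ha b hb
    exact ⟨h1.symm, fun h => h2 h.symm⟩
  have hoff : (((P.filter (fun p => ¬ p.1 = p.2)).card : ZMod 2)) = 0 := by
    rw [Finset.card_eq_sum_ones]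
    push_cast
    refine Finset.sum_involution (f := fun _ => (1 : ZMod 2)) (fun p _ => p.swap)
      (fun p _ => (by decide : (1 : ZMod 2) + 1 = 0))
      (fun p hp _ h => (Finset.mem_filter.1 hp).2 ((congrArg Prod.fst h).symm))
      (fun p hp => ?_) (fun p _ => Prod.swap_swap p)
    rcases Finset.mem_filter.1 hp with ⟨hp', hne⟩
    exact Finset.mem_filter.2 ⟨hswap p hp', fun h => hne (by simpa using h.symm)⟩
  have hPodd : (P.card : ZMod 2) = 1 := by
    have hsplit := Finset.card_filter_add_card_filter_not
      (s := P) (p := fun p => p.1 = p.2)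
    have : ((P.filter (fun p => p.1 = p.2)).card : ZMod 2)
        + ((P.filter (fun p => ¬ p.1 = p.2)).card : ZMod 2) = (P.card : ZMod 2) := by
      exact_mod_cast congrArg (Nat.cast : ℕ → ZMod 2) hsplit
    rw [hdiag] at this
    simp only [Finset.card_singleton, Nat.cast_one, hoff, add_zero] at this
    exact this.symm
  -- conclude
  have hd : (((Finset.univ.powerset.filter (fun W => dominates G W)).card : ℕ) : ZMod 2) = 1 := by
    rw [← hP2, hPodd]
  rw [Nat.odd_iff]
  set d := (Finset.univ.powerset.filter (fun W => dominates G W)).card with hddef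
  have hmod : ((d % 2 : ℕ) : ZMod 2) = 1 := by rw [ZMod.natCast_mod]; exact hd
  rcases Nat.mod_two_eq_zero_or_one d with h | h
  · rw [h] at hmod; exact absurd hmod (by decide)
  · exact h
end

section
/- For any finite graph G = (V,E), the evaluation D(G, −1) of the domination polynomial at −1 is an odd integer. -/
open Finset Polynomial

variable {V : Type*}

open scoped Classical

/-- closed neighborhood of a finset -/
noncomputable def nbhd [Fintype V] (G : SimpleGraph V) (A : Finset V) : Finset V :=
  univ.filter (fun v => v ∈ A ∨ ∃ u ∈ A, G.Adj u v)

/-- the symmetric "no equal or adjacent pair" relation -/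
def indep (G : SimpleGraph V) (p : Finset V × Finset V) : Prop :=
  ∀ a ∈ p.1, ∀ b ∈ p.2, ¬(a = b ∨ G.Adj a b)

lemma indep_swap (G : SimpleGraph V) (p : Finset V × Finset V) (h : indep G p) :
    indep G p.swap := by
  intro a ha b hb hc
  rcases hc with rfl | hadj
  · exact h a hb a ha (Or.inl rfl)
  · exact h b hb a ha (Or.inr hadj.symm)

lemma indep_iff_subset [Fintype V] (G : SimpleGraph V) (A B : Finset V) :
    indep G (A, B) ↔ B ⊆ (nbhd G A)ᶜ := by
  simp only [indep, nbhd, Finset.subset_iff, Finset.mem_compl, Finset.mem_filter,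
    Finset.mem_univ, true_and]
  constructor
  · intro h b hb hc
    rcases hc with hbA | ⟨u, hu, hadj⟩
    · exact h b hbA b hb (Or.inl rfl)
    · exact h u hu b hb (Or.inr hadj)
  · intro h a ha b hb hc
    rcases hc with rfl | hadj
    · exact h hb (Or.inl ha)
    · exact h hb (Or.inr ⟨a, ha, hadj⟩)

lemma nbhd_eq_univ_iff [Fintype V] (G : SimpleGraph V) (A : Finset V) :
    nbhd G A = univ ↔ dominates G A := by
  simp [nbhd, dominates, Finset.eq_univ_iff_forall]

lemma key_count [Fintype V] (G : SimpleGraph V) :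
    ((univ.powerset.filter (fun W => dominates G W)).card : ZMod 2) = 1 := by
  have hS : ∀ A : Finset V,
      ((univ.filter (fun B => indep G (A, B))).card : ZMod 2)
        = (if dominates G A then 1 else 0) := by
    intro A
    have : univ.filter (fun B => indep G (A, B)) = ((nbhd G A)ᶜ).powerset := by
      ext B
      simp [indep_iff_subset]
    rw [this, Finset.card_powerset]
    by_cases h : dominates G A
    · have : (nbhd G A)ᶜ = ∅ := by
        rw [Finset.compl_eq_empty_iff, nbhd_eq_univ_iff]; exact h
      simp [this, h]
    · have hne : (nbhd G A)ᶜ ≠ ∅ := by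
        rw [Ne, Finset.compl_eq_empty_iff, nbhd_eq_univ_iff]; exact h
      have hpos : 0 < (nbhd G A)ᶜ.card := Finset.card_pos.mpr (Finset.nonempty_iff_ne_empty.mpr hne)
      rw [if_neg h]
      obtain ⟨k, hk⟩ := Nat.exists_eq_add_of_lt hpos
      rw [hk]
      push_cast
      ring_nf
      simp [pow_succ, show ((2:ZMod 2)) = 0 by decide]
  -- total count over pairs
  have htot : ((univ.filter (fun p : Finset V × Finset V => indep G p)).card : ZMod 2)
      = ((univ.powerset.filter (fun W => dominates G W)).card : ZMod 2) := by
    rw [Finset.card_filter, Finset.card_filter]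
    push_cast
    rw [Fintype.sum_prod_type]
    have : ∀ A : Finset V,
        (∑ B : Finset V, (if indep G (A, B) then (1:ZMod 2) else 0))
          = (if dominates G A then 1 else 0) := by
      intro A
      rw [← hS A, Finset.card_filter]
      push_cast
      rfl
    rw [Finset.sum_congr rfl (fun A _ => this A)]
    rw [Finset.powerset_univ]
  have hmem : (∅, ∅) ∈ univ.filter (fun p : Finset V × Finset V => indep G p) := by
    simp [indep]
  have hodd : ((univ.filter (fun p : Finset V × Finset V => indep G p)).card : ZMod 2) = 1 := by
    set S := univ.filter (fun p : Finset V × Finset V => indep G p) with hSdef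
    have hins : S = insert (⟨∅, ∅⟩ : Finset V × Finset V) (S.erase (∅, ∅)) :=
      (Finset.insert_erase hmem).symm
    have hcard : (S.card : ZMod 2) = ∑ p ∈ S, (1 : ZMod 2) := by
      simp
    rw [hcard, hins, Finset.sum_insert (Finset.notMem_erase _ _)]
    have hzero : ∑ p ∈ S.erase (∅, ∅), (1 : ZMod 2) = 0 := by
      refine Finset.sum_involution (fun p _ => p.swap) (fun a ha => by decide)
        ?_ ?_ (fun p hp => rfl)
      · intro p hp _
        intro hswap
        have hpS : p ∈ S := Finset.mem_of_mem_erase hp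
        have hind : indep G p := (Finset.mem_filter.mp hpS).2
        have h12 : p.2 = p.1 := congrArg Prod.fst hswap
        have h1e : p.1 = ∅ := by
          by_contra hne
          obtain ⟨a, haa⟩ := Finset.nonempty_iff_ne_empty.mpr hne
          exact hind a haa a (h12 ▸ haa) (Or.inl rfl)
        have : p = (∅, ∅) := by
          have h2e : p.2 = ∅ := h12.trans h1e
          exact Prod.ext h1e h2e
        exact (Finset.mem_erase.mp hp).1 this
      intro p hp
      have hpS : p ∈ S := Finset.mem_of_mem_erase hp
      have hind : indep G p := (Finset.mem_filter.mp hpS).2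
      have hswapS : p.swap ∈ S := by
        rw [hSdef, Finset.mem_filter]
        exact ⟨Finset.mem_univ _, indep_swap G p hind⟩
      rw [Finset.mem_erase]
      refine ⟨?_, hswapS⟩
      intro h
      apply (Finset.mem_erase.mp hp).1
      have h1 : p.1 = ∅ := congrArg Prod.snd h
      have h2 : p.2 = ∅ := congrArg Prod.fst h
      exact Prod.ext h1 h2
    rw [hzero, add_zero]
  rw [← htot, hodd]

/-- `D(G, -1)` is an odd integer. -/
theorem stmt_6 [Fintype V] (G : SimpleGraph V) :
    Odd ((domPoly G).eval (-1)) := by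
  classical
  have hcast : (((domPoly G).eval (-1) : ℤ) : ZMod 2) = 1 := by
    rw [domPoly, Polynomial.eval_finset_sum]
    simp only [Polynomial.eval_pow, Polynomial.eval_X]
    push_cast
    have : ∀ W : Finset V, ((-1 : ZMod 2)) ^ W.card = 1 := by
      intro W
      have : (-1 : ZMod 2) = 1 := by decide
      rw [this, one_pow]
    rw [Finset.sum_congr rfl (fun W _ => this W), Finset.sum_const, nsmul_eq_mul, mul_one]
    exact key_count G
  by_contra hodd
  rw [Int.not_odd_iff_even] at hodd
  obtain ⟨k, hk⟩ := hodd
  rw [hk] at hcast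
  push_cast at hcast
  rw [CharTwo.add_self_eq_zero] at hcast
  exact zero_ne_one hcast
end

section
/- Let G = (V,E) be a graph. Then D(G,−1) = (−1)^{|V|} · ∑_{F ⊆ E, (V,F) bipartite} (−1)^{|F|} 2^{c(F)}, where c(F) denotes the number of connected components of (V,F) that contain at least one edge. -/
open Finset Polynomial

variable {V : Type*}



lemma xor_eq_of_reachable {H : SimpleGraph V} {f g : V → Bool}
    (hf : ∀ u v, H.Adj u v → f u ≠ f v) (hg : ∀ u v, H.Adj u v → g u ≠ g v)
    {u v : V} (h : H.Reachable u v) : xor (f u) (g u) = xor (f v) (g v) := by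
  obtain ⟨w⟩ := h
  induction w with
  | nil => rfl
  | @cons a b c hab p ih =>
    have h1 : f a = !f b := by
      have := hf _ _ hab; revert this; cases f a <;> cases f b <;> simp
    have h2 : g a = !g b := by
      have := hg _ _ hab; revert this; cases g a <;> cases g b <;> simp
    rw [h1, h2, ← ih]
    cases f b <;> cases g b <;> rfl

lemma exists_adj_of_reachable {H : SimpleGraph V} {u v : V} (h : H.Reachable u v)
    (hu : ∃ w, H.Adj u w) : ∃ w, H.Adj v w := by
  obtain ⟨w⟩ := h.symm
  cases w with
  | nil => exact hu
  | cons h' p' => exact ⟨_, h'⟩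

open scoped Classical in
lemma count_lemma_cl [Fintype V] (H : SimpleGraph V) :
    ((univ : Finset (V → Bool)).filter (fun f =>
        (∀ u v, H.Adj u v → f u ≠ f v) ∧ ∀ v, (∀ u, ¬ H.Adj v u) → f v = false)).card
      = if H.Colorable 2 then
          2 ^ (univ.filter (fun c : H.ConnectedComponent =>
                ∃ u v : V, H.Adj u v ∧ u ∈ c.supp)).card
        else 0 := by
  by_cases hcol : H.Colorable 2
  · rw [if_pos hcol]
    obtain ⟨C⟩ := hcol
    set f₀ : V → Bool := fun v => decide (C v = 1) with hf₀
    have hf₀p : ∀ u v, H.Adj u v → f₀ u ≠ f₀ v := by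
      intro u v huv
      have hkey : ∀ a b : Fin 2, a ≠ b → (decide (a = 1)) ≠ (decide (b = 1)) := by decide
      exact hkey _ _ (C.valid huv)
    have main : ((univ : Finset (V → Bool)).filter (fun f =>
        (∀ u v, H.Adj u v → f u ≠ f v) ∧ ∀ v, (∀ u, ¬ H.Adj v u) → f v = false)).card
        = ((univ : Finset ({c : H.ConnectedComponent //
            ∃ u v : V, H.Adj u v ∧ u ∈ c.supp} → Bool))).card := by
      refine Finset.card_bij'
        (i := fun f _ => fun c => xor (f c.2.choose) (f₀ c.2.choose))
        (j := fun g _ => fun v =>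
          if h : ∃ u, H.Adj v u then
            xor (f₀ v) (g ⟨H.connectedComponentMk v, v, h.choose, h.choose_spec,
              (SimpleGraph.ConnectedComponent.mem_supp_iff _ _).2 rfl⟩)
          else false) ?hi ?hj ?li ?ri
      case hi => intro f hf; exact mem_univ _
      case hj =>
        intro g hg
        simp only [mem_filter, mem_univ, true_and]
        constructor
        · intro u v huv
          have hu : ∃ w, H.Adj u w := ⟨v, huv⟩
          have hv : ∃ w, H.Adj v w := ⟨u, huv.symm⟩
          rw [dif_pos hu, dif_pos hv]
          have hcc : H.connectedComponentMk u = H.connectedComponentMk v :=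
            SimpleGraph.ConnectedComponent.connectedComponentMk_eq_of_adj huv
          have harg : g ⟨H.connectedComponentMk u, u, hu.choose, hu.choose_spec,
                (SimpleGraph.ConnectedComponent.mem_supp_iff _ _).2 rfl⟩
              = g ⟨H.connectedComponentMk v, v, hv.choose, hv.choose_spec,
                (SimpleGraph.ConnectedComponent.mem_supp_iff _ _).2 rfl⟩ := by
            congr 1
            exact Subtype.ext hcc
          rw [harg]
          have := hf₀p _ _ huv
          revert this
          cases f₀ u <;> cases f₀ v <;>
            cases g ⟨H.connectedComponentMk v, v, hv.choose, hv.choose_spec,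
              (SimpleGraph.ConnectedComponent.mem_supp_iff _ _).2 rfl⟩ <;> simp
        · intro v hv
          rw [dif_neg]
          push_neg
          intro u
          exact hv u
      case li =>
        intro f hf
        simp only [mem_filter, mem_univ, true_and] at hf
        funext v
        have hxor : ∀ (c : {c : H.ConnectedComponent // ∃ u v : V, H.Adj u v ∧ u ∈ c.supp}),
            v ∈ c.1.supp → xor (f c.2.choose) (f₀ c.2.choose) = xor (f v) (f₀ v) := by
          intro c hcv
          obtain ⟨w, hadj, hsupp⟩ := c.2.choose_spec
          rw [SimpleGraph.ConnectedComponent.mem_supp_iff] at hsupp hcv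
          exact xor_eq_of_reachable hf.1 hf₀p
            (SimpleGraph.ConnectedComponent.exact (hsupp.trans hcv.symm))
        show (if h : ∃ u, H.Adj v u then _ else false) = f v
        by_cases h : ∃ u, H.Adj v u
        · rw [dif_pos h]
          dsimp only
          rw [hxor ⟨H.connectedComponentMk v, v, h.choose, h.choose_spec,
              (SimpleGraph.ConnectedComponent.mem_supp_iff _ _).2 rfl⟩
            ((SimpleGraph.ConnectedComponent.mem_supp_iff _ _).2 rfl)]
          cases f v <;> cases f₀ v <;> rfl
        · rw [dif_neg h]
          push_neg at h
          exact (hf.2 v h).symm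
      case ri =>
        intro g hg
        funext c
        obtain ⟨w, hadj, hsupp⟩ := c.2.choose_spec
        have hadj' : ∃ x, H.Adj c.2.choose x := ⟨w, hadj⟩
        show xor (if h : ∃ u, H.Adj c.2.choose u then _ else false) _ = g c
        rw [dif_pos hadj']
        have harg : (⟨H.connectedComponentMk c.2.choose, c.2.choose, hadj'.choose,
              hadj'.choose_spec,
              (SimpleGraph.ConnectedComponent.mem_supp_iff _ _).2 rfl⟩ :
              {c : H.ConnectedComponent // ∃ u v : V, H.Adj u v ∧ u ∈ c.supp}) = c := by
          apply Subtype.ext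
          exact (SimpleGraph.ConnectedComponent.mem_supp_iff _ _).1 hsupp
        rw [harg]
        cases f₀ c.2.choose <;> cases g c <;> rfl
    rw [main, card_univ, Fintype.card_fun, Fintype.card_bool, Fintype.card_subtype]
  · rw [if_neg hcol]
    rw [Finset.card_eq_zero, Finset.filter_eq_empty_iff]
    intro f _
    rintro ⟨hproper, -⟩
    apply hcol
    have C : H.Coloring (Fin 2) :=
      SimpleGraph.Coloring.mk (fun v => if f v then 0 else 1) (by
        intro u v huv
        have hne := hproper u v huv
        by_cases hu : f u <;> by_cases hv : f v <;>
          simp [hu, hv] at hne ⊢)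
    exact ⟨C⟩



open scoped Classical in
lemma count_lemma [Fintype V] (H : SimpleGraph V)
    {inst1 : Fintype H.ConnectedComponent}
    {inst2 : DecidablePred (fun c : H.ConnectedComponent =>
      ∃ u v : V, H.Adj u v ∧ u ∈ c.supp)}
    {inst3 : DecidablePred (fun f : V → Bool =>
      (∀ u v, H.Adj u v → f u ≠ f v) ∧ ∀ v, (∀ u, ¬ H.Adj v u) → f v = false)}
    {inst4 : Decidable (H.Colorable 2)} {inst0 : Fintype (V → Bool)} :
    (@filter _ _ inst3 (@univ (V → Bool) inst0)).card
      = @ite _ (H.Colorable 2) inst4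
          (2 ^ (@filter _ _ inst2 (@univ _ inst1)).card) 0 := by
  classical
  convert count_lemma_cl H using 2 <;> congr!

open scoped Classical in
lemma pairs_sum [Fintype V] [DecidableEq V] (X : Finset V) :
    ∑ q : Finset V × Finset V,
      (if q.1 ⊆ X ∧ q.2 ⊆ X ∧ Disjoint q.1 q.2 then ((-1:ℤ)) ^ (q.1.card + q.2.card) else 0)
    = (-1) ^ X.card := by
  rw [Fintype.sum_prod_type]
  have inner : ∀ A : Finset V, (∑ B : Finset V, if A ⊆ X ∧ B ⊆ X ∧ Disjoint A B then
      ((-1:ℤ)) ^ (A.card + B.card) else 0)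
      = if A ⊆ X then (-1:ℤ) ^ A.card * (if X \ A = ∅ then 1 else 0) else 0 := by
    intro A
    by_cases hA : A ⊆ X
    · rw [if_pos hA]
      have hterm : ∀ B : Finset V, (if A ⊆ X ∧ B ⊆ X ∧ Disjoint A B then
          ((-1:ℤ)) ^ (A.card + B.card) else 0)
          = (-1:ℤ) ^ A.card * (if B ⊆ X \ A then (-1:ℤ) ^ B.card else 0) := by
        intro B
        by_cases hB : B ⊆ X \ A
        · rw [if_pos ⟨hA, (Finset.subset_sdiff.1 hB).1, ((Finset.subset_sdiff.1 hB).2).symm⟩,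
            if_pos hB, pow_add]
        · rw [if_neg, if_neg hB, mul_zero]
          rintro ⟨h1, h2, h3⟩
          exact hB (Finset.subset_sdiff.2 ⟨h2, h3.symm⟩)
      rw [Finset.sum_congr rfl (fun B _ => hterm B), ← Finset.mul_sum]
      congr 1
      rw [← Finset.sum_filter]
      have hps : univ.filter (· ⊆ X \ A) = (X \ A).powerset := by
        ext B; simp [Finset.mem_powerset]
      rw [hps, sum_powerset_neg_one_pow_card]
    · rw [if_neg hA]
      apply Finset.sum_eq_zero
      intro B _
      rw [if_neg]
      rintro ⟨h1, -⟩
      exact hA h1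
  rw [Finset.sum_congr rfl (fun A _ => inner A)]
  rw [Finset.sum_eq_single_of_mem X (mem_univ X)]
  · rw [if_pos (subset_refl X), sdiff_self]
    simp
  · intro A _ hAne
    by_cases hA : A ⊆ X
    · rw [if_pos hA, if_neg, mul_zero]
      rw [Finset.sdiff_eq_empty_iff_subset]
      intro hXA
      exact hAne (Finset.Subset.antisymm hA hXA)
    · rw [if_neg hA]



set_option maxHeartbeats 1000000 in
open scoped Classical in
lemma lemC [Fintype V] [DecidableEq V] (F : Finset (Sym2 V)) (hF : ∀ e ∈ F, ¬ e.IsDiag) :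
    (∑ p : Finset V × Finset V,
      if Disjoint p.1 p.2 ∧ ∀ e ∈ F, ∃ u ∈ p.1, ∃ v ∈ p.2, e = s(u, v) then
        ((-1:ℤ)) ^ (p.1.card + p.2.card) else 0)
    = (-1) ^ (Fintype.card V) *
      (if (SimpleGraph.fromEdgeSet (↑F : Set (Sym2 V))).Colorable 2 then
        (2:ℤ) ^ ((univ.filter
          (fun c : (SimpleGraph.fromEdgeSet (↑F : Set (Sym2 V))).ConnectedComponent =>
            ∃ u v : V, (SimpleGraph.fromEdgeSet (↑F : Set (Sym2 V))).Adj u v ∧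
              u ∈ c.supp)).card) else 0) := by
  set H := SimpleGraph.fromEdgeSet (↑F : Set (Sym2 V)) with hH
  have hadj : ∀ u v : V, H.Adj u v ↔ s(u, v) ∈ F := by
    intro u v
    rw [hH, SimpleGraph.fromEdgeSet_adj]
    constructor
    · rintro ⟨h, -⟩; exact_mod_cast h
    · intro h
      refine ⟨by exact_mod_cast h, fun huv => hF _ h ?_⟩
      rw [huv]; exact Sym2.mk_isDiag_iff.2 rfl
  set sP : V → Prop := fun v => ∃ u, H.Adj v u with hsP
  set sFin : Finset V := univ.filter sP with hsFin
  set X : Finset V := univ.filter (fun v => ¬ sP v) with hX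
  set Fset : Finset (V → Bool) := univ.filter (fun f =>
      (∀ u v, H.Adj u v → f u ≠ f v) ∧ ∀ v, (∀ u, ¬ H.Adj v u) → f v = false) with hFset
  set P2 : Finset (Finset V × Finset V) := univ.filter
      (fun q => q.1 ⊆ X ∧ q.2 ⊆ X ∧ Disjoint q.1 q.2) with hP2
  -- step 1 : turn the ite-sum into a sum over a filter
  rw [← Finset.sum_filter]
  -- step 2 : bijection
  have step2 : ∑ p ∈ univ.filter (fun p : Finset V × Finset V =>
        Disjoint p.1 p.2 ∧ ∀ e ∈ F, ∃ u ∈ p.1, ∃ v ∈ p.2, e = s(u, v)),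
        ((-1:ℤ)) ^ (p.1.card + p.2.card)
      = ∑ fq ∈ Fset ×ˢ P2, ((-1:ℤ)) ^ (sFin.card + (fq.2.1.card + fq.2.2.card)) := by
    refine Finset.sum_nbij'
      (i := fun p => (fun v => decide (v ∈ p.1 ∧ sP v),
        (p.1.filter (fun v => ¬ sP v), p.2.filter (fun v => ¬ sP v))))
      (j := fun fq => (sFin.filter (fun v => fq.1 v = true) ∪ fq.2.1,
        sFin.filter (fun v => fq.1 v = false) ∪ fq.2.2))
      ?hi ?hj ?li ?ri ?hw
    case hi =>
      rintro ⟨A, B⟩ hp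
      rw [mem_filter] at hp
      obtain ⟨-, hdisj, hcr⟩ := hp
      have hcross : ∀ u v, H.Adj u v → (u ∈ A ∧ v ∈ B) ∨ (u ∈ B ∧ v ∈ A) := by
        intro u v huv
        obtain ⟨a, ha, b, hb, he⟩ := hcr s(u, v) ((hadj u v).1 huv)
        rw [Sym2.eq_iff] at he
        rcases he with ⟨rfl, rfl⟩ | ⟨rfl, rfl⟩
        · exact Or.inl ⟨ha, hb⟩
        · exact Or.inr ⟨hb, ha⟩
      rw [Finset.mem_product]
      constructor
      · rw [hFset, mem_filter]
        refine ⟨mem_univ _, ?_, ?_⟩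
        · intro u v huv
          have hu : sP u := ⟨v, huv⟩
          have hv : sP v := ⟨u, huv.symm⟩
          rcases hcross u v huv with ⟨huA, hvB⟩ | ⟨huB, hvA⟩
          · have h1 : decide (u ∈ A ∧ sP u) = true := by simp [huA, hu]
            have h2 : decide (v ∈ A ∧ sP v) = false := by
              simp only [decide_eq_false_iff_not]
              rintro ⟨hvA, -⟩
              exact (Finset.disjoint_left.1 hdisj hvA) hvB
            simp [h1, h2]
          · have h1 : decide (u ∈ A ∧ sP u) = false := by
              simp only [decide_eq_false_iff_not]
              rintro ⟨huA, -⟩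
              exact (Finset.disjoint_left.1 hdisj huA) huB
            have h2 : decide (v ∈ A ∧ sP v) = true := by simp [hvA, hv]
            simp [h1, h2]
        · intro v hv
          simp only [decide_eq_false_iff_not]
          rintro ⟨-, u, hu⟩
          exact hv u hu
      · rw [hP2, mem_filter]
        refine ⟨mem_univ _, ?_, ?_, ?_⟩
        · intro v hv
          rw [Finset.mem_filter] at hv
          rw [hX, mem_filter]
          exact ⟨mem_univ _, hv.2⟩
        · intro v hv
          rw [Finset.mem_filter] at hv
          rw [hX, mem_filter]
          exact ⟨mem_univ _, hv.2⟩
        · exact Finset.disjoint_filter_filter hdisj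
    case hj =>
      rintro ⟨f, A2, B2⟩ hfq
      rw [Finset.mem_product] at hfq
      obtain ⟨hf, hq⟩ := hfq
      rw [hFset, mem_filter] at hf
      obtain ⟨-, hfp, hfo⟩ := hf
      rw [hP2, mem_filter] at hq
      obtain ⟨-, hA2, hB2, hdisj2⟩ := hq
      dsimp only at hfp hfo hA2 hB2 hdisj2
      have hA2' : ∀ v ∈ A2, ¬ sP v := by
        intro v hv; have := hA2 hv; rw [hX, mem_filter] at this; exact this.2
      have hB2' : ∀ v ∈ B2, ¬ sP v := by
        intro v hv; have := hB2 hv; rw [hX, mem_filter] at this; exact this.2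
      rw [mem_filter]
      refine ⟨mem_univ _, ?_, ?_⟩
      · -- disjointness
        simp only [Finset.disjoint_union_left, Finset.disjoint_union_right]
        refine ⟨⟨?_, ?_⟩, ?_, hdisj2⟩
        · rw [Finset.disjoint_left]
          intro v h1 h2
          rw [Finset.mem_filter] at h1 h2
          rw [h1.2] at h2
          exact absurd h2.2 (by simp)
        · rw [Finset.disjoint_left]
          intro v h1 h2
          rw [Finset.mem_filter, Finset.mem_filter] at h2
          exact hA2' v h1 h2.1.2
        · rw [Finset.disjoint_left]
          intro v h1 h2
          rw [Finset.mem_filter, Finset.mem_filter] at h1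
          exact hB2' v h2 h1.1.2
      · -- crossing
        intro e he
        induction e using Sym2.ind with
        | _ u v =>
          have huv : H.Adj u v := (hadj u v).2 he
          have hu : sP u := ⟨v, huv⟩
          have hv : sP v := ⟨u, huv.symm⟩
          have hne := hfp u v huv
          by_cases hfu : f u = true
          · have hfv : f v = false := by
              revert hne; rw [hfu]; cases f v <;> simp
            exact ⟨u, Finset.mem_union_left _ (Finset.mem_filter.2
                ⟨Finset.mem_filter.2 ⟨mem_univ _, hu⟩, hfu⟩),
              v, Finset.mem_union_left _ (Finset.mem_filter.2
                ⟨Finset.mem_filter.2 ⟨mem_univ _, hv⟩, hfv⟩), rfl⟩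
          · have hfu' : f u = false := by revert hfu; cases f u <;> simp
            have hfv : f v = true := by
              revert hne; rw [hfu']; cases f v <;> simp
            refine ⟨v, Finset.mem_union_left _ (Finset.mem_filter.2
                ⟨Finset.mem_filter.2 ⟨mem_univ _, hv⟩, hfv⟩),
              u, Finset.mem_union_left _ (Finset.mem_filter.2
                ⟨Finset.mem_filter.2 ⟨mem_univ _, hu⟩, hfu'⟩), ?_⟩
            exact Sym2.eq_swap
    case li =>
      rintro ⟨A, B⟩ hp
      rw [mem_filter] at hp
      obtain ⟨-, hdisj, hcr⟩ := hp
      have hcross : ∀ u v, H.Adj u v → (u ∈ A ∧ v ∈ B) ∨ (u ∈ B ∧ v ∈ A) := by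
        intro u v huv
        obtain ⟨a, ha, b, hb, he⟩ := hcr s(u, v) ((hadj u v).1 huv)
        rw [Sym2.eq_iff] at he
        rcases he with ⟨rfl, rfl⟩ | ⟨rfl, rfl⟩
        · exact Or.inl ⟨ha, hb⟩
        · exact Or.inr ⟨hb, ha⟩
      have hcover : ∀ v, sP v → v ∈ A ∨ v ∈ B := by
        rintro v ⟨u, hvu⟩
        rcases hcross v u hvu with ⟨h1, -⟩ | ⟨h1, -⟩
        · exact Or.inl h1
        · exact Or.inr h1
      simp only [Prod.mk.injEq]
      constructor
      · ext v
        simp only [Finset.mem_union, Finset.mem_filter, hsFin, mem_univ, true_and,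
          decide_eq_true_eq]
        constructor
        · rintro (⟨hs, hvA, -⟩ | ⟨hvA, -⟩) <;> exact hvA
        · intro hvA
          by_cases hs : sP v
          · exact Or.inl ⟨hs, hvA, hs⟩
          · exact Or.inr ⟨hvA, hs⟩
      · ext v
        simp only [Finset.mem_union, Finset.mem_filter, hsFin, mem_univ, true_and,
          decide_eq_false_iff_not]
        constructor
        · rintro (⟨hs, hne⟩ | ⟨hvB, -⟩)
          · rcases hcover v hs with hvA | hvB
            · exact absurd ⟨hvA, hs⟩ hne
            · exact hvB
          · exact hvB
        · intro hvB
          by_cases hs : sP v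
          · refine Or.inl ⟨hs, ?_⟩
            rintro ⟨hvA, -⟩
            exact (Finset.disjoint_left.1 hdisj hvA) hvB
          · exact Or.inr ⟨hvB, hs⟩
    case ri =>
      rintro ⟨f, A2, B2⟩ hfq
      rw [Finset.mem_product] at hfq
      obtain ⟨hf, hq⟩ := hfq
      rw [hFset, mem_filter] at hf
      obtain ⟨-, hfp, hfo⟩ := hf
      rw [hP2, mem_filter] at hq
      obtain ⟨-, hA2, hB2, hdisj2⟩ := hq
      dsimp only at hfp hfo hA2 hB2 hdisj2
      have hA2' : ∀ v ∈ A2, ¬ sP v := by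
        intro v hv; have := hA2 hv; rw [hX, mem_filter] at this; exact this.2
      have hB2' : ∀ v ∈ B2, ¬ sP v := by
        intro v hv; have := hB2 hv; rw [hX, mem_filter] at this; exact this.2
      simp only [Prod.mk.injEq]
      refine ⟨?_, ?_, ?_⟩
      · funext v
        by_cases hs : sP v
        · have hvA2 : v ∉ A2 := fun h => hA2' v h hs
          by_cases hfv : f v = true
          · have : v ∈ sFin.filter (fun v => f v = true) ∪ A2 :=
              Finset.mem_union_left _ (Finset.mem_filter.2
                ⟨Finset.mem_filter.2 ⟨mem_univ _, hs⟩, hfv⟩)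
            simp [this, hs, hfv]
          · have hfv' : f v = false := by revert hfv; cases f v <;> simp
            have : v ∉ sFin.filter (fun v => f v = true) ∪ A2 := by
              rw [Finset.mem_union]
              rintro (h | h)
              · exact hfv (Finset.mem_filter.1 h).2
              · exact hvA2 h
            simp [this, hfv']
        · have hfv' : f v = false := by
            apply hfo
            intro u hu
            exact hs ⟨u, hu⟩
          simp [hs, hfv']
      · ext v
        simp only [Finset.mem_filter, Finset.mem_union]
        constructor
        · rintro ⟨h1 | h1, h2⟩
          · exact absurd (Finset.mem_filter.1 h1.1).2 h2
          · exact h1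
        · intro hv
          exact ⟨Or.inr hv, hA2' v hv⟩
      · ext v
        simp only [Finset.mem_filter, Finset.mem_union]
        constructor
        · rintro ⟨h1 | h1, h2⟩
          · exact absurd (Finset.mem_filter.1 h1.1).2 h2
          · exact h1
        · intro hv
          exact ⟨Or.inr hv, hB2' v hv⟩
    case hw =>
      rintro ⟨A, B⟩ hp
      rw [mem_filter] at hp
      obtain ⟨-, hdisj, hcr⟩ := hp
      have hcross : ∀ u v, H.Adj u v → (u ∈ A ∧ v ∈ B) ∨ (u ∈ B ∧ v ∈ A) := by
        intro u v huv
        obtain ⟨a, ha, b, hb, he⟩ := hcr s(u, v) ((hadj u v).1 huv)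
        rw [Sym2.eq_iff] at he
        rcases he with ⟨rfl, rfl⟩ | ⟨rfl, rfl⟩
        · exact Or.inl ⟨ha, hb⟩
        · exact Or.inr ⟨hb, ha⟩
      have hcover : ∀ v, sP v → v ∈ A ∨ v ∈ B := by
        rintro v ⟨u, hvu⟩
        rcases hcross v u hvu with ⟨h1, -⟩ | ⟨h1, -⟩
        · exact Or.inl h1
        · exact Or.inr h1
      have h1 : (A.filter sP).card + (A.filter (fun v => ¬ sP v)).card = A.card :=
        Finset.card_filter_add_card_filter_not _
      have h2 : (B.filter sP).card + (B.filter (fun v => ¬ sP v)).card = B.card :=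
        Finset.card_filter_add_card_filter_not _
      have hsplit : sFin = A.filter sP ∪ B.filter sP := by
        ext v
        simp only [hsFin, Finset.mem_filter, Finset.mem_union, mem_univ, true_and]
        constructor
        · intro hs
          rcases hcover v hs with h | h
          · exact Or.inl ⟨h, hs⟩
          · exact Or.inr ⟨h, hs⟩
        · rintro (⟨-, hs⟩ | ⟨-, hs⟩) <;> exact hs
      have hdisj' : Disjoint (A.filter sP) (B.filter sP) :=
        Finset.disjoint_filter_filter hdisj
      have hcards : sFin.card = (A.filter sP).card + (B.filter sP).card := by
        rw [hsplit, Finset.card_union_of_disjoint hdisj']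
      dsimp only
      congr 1
      omega
  rw [step2]
  -- step 3 : product sum
  rw [Finset.sum_product]
  have hconst : ∀ f ∈ Fset, (∑ q ∈ P2, ((-1:ℤ)) ^ (sFin.card + (q.1.card + q.2.card)))
      = (-1:ℤ) ^ sFin.card * ((-1:ℤ)) ^ X.card := by
    intro f _
    have : (∑ q ∈ P2, ((-1:ℤ)) ^ (sFin.card + (q.1.card + q.2.card)))
        = (-1:ℤ) ^ sFin.card * ∑ q ∈ P2, ((-1:ℤ)) ^ (q.1.card + q.2.card) := by
      rw [Finset.mul_sum]
      exact Finset.sum_congr rfl fun q _ => by rw [pow_add]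
    rw [this]
    congr 1
    rw [hP2, Finset.sum_filter]
    exact pairs_sum X
  rw [Finset.sum_congr rfl hconst, Finset.sum_const, nsmul_eq_mul]
  have hn : sFin.card + X.card = Fintype.card V := by
    rw [hsFin, hX, Finset.card_filter_add_card_filter_not, Finset.card_univ]
  have hFc : Fset.card = if H.Colorable 2 then
      2 ^ ((univ.filter (fun c : H.ConnectedComponent =>
        ∃ u v : V, H.Adj u v ∧ u ∈ c.supp)).card) else 0 := by
    rw [hFset]
    exact count_lemma H
  rw [hFc, ← pow_add, hn]
  by_cases hcol : H.Colorable 2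
  · simp only [hcol, if_true]
    rw [if_pos hcol]
    push_cast
    ring
  · simp [hcol]
    exact hcol


open scoped Classical in
/-- `D(G,-1)` as an alternating sum over bipartite spanning subgraphs,
where `c(F)` is the number of components of `(V,F)` containing at least one edge. -/
theorem stmt_7 [Fintype V] [DecidableEq V] (G : SimpleGraph V) [DecidableRel G.Adj] :
    (domPoly G).eval (-1)
      = (-1 : ℤ) ^ Fintype.card V *
        ∑ F ∈ G.edgeFinset.powerset.filter
            (fun F : Finset (Sym2 V) =>
              (SimpleGraph.fromEdgeSet (↑F : Set (Sym2 V))).Colorable 2),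
          (-1 : ℤ) ^ F.card *
            2 ^ (Finset.univ.filter
              (fun c : (SimpleGraph.fromEdgeSet (↑F : Set (Sym2 V))).ConnectedComponent =>
                ∃ u v : V, (SimpleGraph.fromEdgeSet (↑F : Set (Sym2 V))).Adj u v ∧
                  u ∈ c.supp)).card := by
  classical
  have hLHS : (domPoly G).eval (-1)
      = ∑ W ∈ Finset.univ.powerset.filter (fun W => dominates G W), ((-1:ℤ)) ^ W.card := by
    rw [domPoly, Polynomial.eval_finset_sum]
    simp
  set S : ℤ := ∑ p : Finset V × Finset V,
    (if Disjoint p.1 p.2 ∧ ∀ u ∈ p.1, ∀ v ∈ p.2, ¬ G.Adj u v then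
      ((-1:ℤ)) ^ (p.1.card + p.2.card) else 0) with hS
  have hA : S = ∑ W ∈ Finset.univ.powerset.filter (fun W => dominates G W), ((-1:ℤ)) ^ W.card := by
    rw [hS, Fintype.sum_prod_type]
    have inner : ∀ A : Finset V, (∑ B : Finset V,
        if Disjoint A B ∧ ∀ u ∈ A, ∀ v ∈ B, ¬ G.Adj u v then
          ((-1:ℤ)) ^ (A.card + B.card) else 0)
        = if dominates G A then ((-1:ℤ)) ^ A.card else 0 := by
      intro A
      set T : Finset V := univ.filter (fun v => v ∉ A ∧ ∀ u ∈ A, ¬ G.Adj u v) with hT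
      have hcond : ∀ B : Finset V,
          (Disjoint A B ∧ ∀ u ∈ A, ∀ v ∈ B, ¬ G.Adj u v) ↔ B ⊆ T := by
        intro B
        constructor
        · rintro ⟨hd, hne⟩ v hv
          rw [hT, mem_filter]
          exact ⟨mem_univ _, Finset.disjoint_right.1 hd hv, fun u hu => hne u hu v hv⟩
        · intro hBT
          constructor
          · rw [Finset.disjoint_right]
            intro v hv
            exact ((Finset.mem_filter.1 (hBT hv)).2).1
          · intro u hu v hv
            exact ((Finset.mem_filter.1 (hBT hv)).2).2 u hu
      have hrw : ∀ B : Finset V, (if Disjoint A B ∧ ∀ u ∈ A, ∀ v ∈ B, ¬ G.Adj u v then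
          ((-1:ℤ)) ^ (A.card + B.card) else 0)
          = (-1:ℤ) ^ A.card * (if B ⊆ T then ((-1:ℤ)) ^ B.card else 0) := by
        intro B
        by_cases h : B ⊆ T
        · rw [if_pos ((hcond B).2 h), if_pos h, pow_add]
        · rw [if_neg (fun hc => h ((hcond B).1 hc)), if_neg h, mul_zero]
      rw [Finset.sum_congr rfl (fun B _ => hrw B), ← Finset.mul_sum, ← Finset.sum_filter]
      have hps : univ.filter (· ⊆ T) = T.powerset := by
        ext B; simp [Finset.mem_powerset]
      rw [hps, sum_powerset_neg_one_pow_card]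
      have hdom : (T = ∅) ↔ dominates G A := by
        rw [Finset.eq_empty_iff_forall_notMem]
        constructor
        · intro h v
          by_contra hc
          push_neg at hc
          exact h v (by rw [hT, mem_filter]; exact ⟨mem_univ _, hc.1, hc.2⟩)
        · intro hd v hv
          rw [hT, mem_filter] at hv
          rcases hd v with h | ⟨u, hu, hadj⟩
          · exact hv.2.1 h
          · exact hv.2.2 u hu hadj
      by_cases h : dominates G A
      · rw [if_pos (hdom.2 h), if_pos h, mul_one]
      · rw [if_neg (fun he => h (hdom.1 he)), if_neg h, mul_zero]
    rw [Finset.sum_congr rfl (fun A _ => inner A), ← Finset.sum_filter, Finset.powerset_univ]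
  have hB : S = ∑ F ∈ G.edgeFinset.powerset, ((-1:ℤ)) ^ F.card *
      ((-1:ℤ) ^ (Fintype.card V) *
      (if (SimpleGraph.fromEdgeSet (↑F : Set (Sym2 V))).Colorable 2 then
        (2:ℤ) ^ ((univ.filter
          (fun c : (SimpleGraph.fromEdgeSet (↑F : Set (Sym2 V))).ConnectedComponent =>
            ∃ u v : V, (SimpleGraph.fromEdgeSet (↑F : Set (Sym2 V))).Adj u v ∧
              u ∈ c.supp)).card) else 0)) := by
    rw [hS]
    have hpair : ∀ p : Finset V × Finset V,
        (if Disjoint p.1 p.2 ∧ ∀ u ∈ p.1, ∀ v ∈ p.2, ¬ G.Adj u v then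
          ((-1:ℤ)) ^ (p.1.card + p.2.card) else 0)
        = ∑ F ∈ G.edgeFinset.powerset,
            (if Disjoint p.1 p.2 ∧ ∀ e ∈ F, ∃ u ∈ p.1, ∃ v ∈ p.2, e = s(u, v) then
              ((-1:ℤ)) ^ (p.1.card + p.2.card) * ((-1:ℤ)) ^ F.card else 0) := by
      rintro ⟨A, B⟩
      dsimp only
      by_cases hd : Disjoint A B
      · have hsimp : ∀ F ∈ G.edgeFinset.powerset,
            (if Disjoint A B ∧ ∀ e ∈ F, ∃ u ∈ A, ∃ v ∈ B, e = s(u, v) then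
              ((-1:ℤ)) ^ (A.card + B.card) * ((-1:ℤ)) ^ F.card else 0)
            = ((-1:ℤ)) ^ (A.card + B.card) *
              (if (∀ e ∈ F, ∃ u ∈ A, ∃ v ∈ B, e = s(u, v)) then ((-1:ℤ)) ^ F.card else 0) := by
          intro F _
          by_cases hc : ∀ e ∈ F, ∃ u ∈ A, ∃ v ∈ B, e = s(u, v)
          · rw [if_pos ⟨hd, hc⟩, if_pos hc]
          · rw [if_neg (fun h => hc h.2), if_neg hc, mul_zero]
        rw [Finset.sum_congr rfl hsimp, ← Finset.mul_sum]
        set EAB := G.edgeFinset.filter (fun e => ∃ u ∈ A, ∃ v ∈ B, e = s(u, v)) with hEAB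
        have hfilter : G.edgeFinset.powerset.filter
            (fun F => ∀ e ∈ F, ∃ u ∈ A, ∃ v ∈ B, e = s(u, v)) = EAB.powerset := by
          ext F
          simp only [Finset.mem_filter, Finset.mem_powerset, hEAB]
          constructor
          · rintro ⟨h1, h2⟩ e he
            exact Finset.mem_filter.2 ⟨h1 he, h2 e he⟩
          · intro h
            exact ⟨fun e he => (Finset.mem_filter.1 (h he)).1,
              fun e he => (Finset.mem_filter.1 (h he)).2⟩
        rw [← Finset.sum_filter, hfilter, sum_powerset_neg_one_pow_card]
        have hempty : (EAB = ∅) ↔ (∀ u ∈ A, ∀ v ∈ B, ¬ G.Adj u v) := by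
          rw [hEAB, Finset.filter_eq_empty_iff]
          constructor
          · intro h u hu v hv hadj
            exact h (SimpleGraph.mem_edgeFinset.2 ((SimpleGraph.mem_edgeSet G).2 hadj))
              ⟨u, hu, v, hv, rfl⟩
          · rintro h e he ⟨u, hu, v, hv, rfl⟩
            exact h u hu v hv ((SimpleGraph.mem_edgeSet G).1 (SimpleGraph.mem_edgeFinset.1 he))
        by_cases hne : ∀ u ∈ A, ∀ v ∈ B, ¬ G.Adj u v
        · rw [if_pos ⟨hd, hne⟩, if_pos (hempty.2 hne), mul_one]
        · rw [if_neg (fun h => hne h.2), if_neg (fun h => hne (hempty.1 h)), mul_zero]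
      · rw [if_neg (fun h => hd h.1)]
        symm
        apply Finset.sum_eq_zero
        intro F _
        rw [if_neg (fun h => hd h.1)]
    rw [Finset.sum_congr rfl (fun p _ => hpair p), Finset.sum_comm]
    apply Finset.sum_congr rfl
    intro F hF
    have hFdiag : ∀ e ∈ F, ¬ e.IsDiag := fun e he =>
      G.not_isDiag_of_mem_edgeSet
        (SimpleGraph.mem_edgeFinset.1 ((Finset.mem_powerset.1 hF) he))
    have hC := lemC F hFdiag
    have hpull : ∑ p : Finset V × Finset V,
        (if Disjoint p.1 p.2 ∧ ∀ e ∈ F, ∃ u ∈ p.1, ∃ v ∈ p.2, e = s(u, v) then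
          ((-1:ℤ)) ^ (p.1.card + p.2.card) * ((-1:ℤ)) ^ F.card else 0)
        = ((-1:ℤ)) ^ F.card * ∑ p : Finset V × Finset V,
          (if Disjoint p.1 p.2 ∧ ∀ e ∈ F, ∃ u ∈ p.1, ∃ v ∈ p.2, e = s(u, v) then
            ((-1:ℤ)) ^ (p.1.card + p.2.card) else 0) := by
      rw [Finset.mul_sum]
      apply Finset.sum_congr rfl
      intro p _
      by_cases h : Disjoint p.1 p.2 ∧ ∀ e ∈ F, ∃ u ∈ p.1, ∃ v ∈ p.2, e = s(u, v)
      · rw [if_pos h, if_pos h]; ring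
      · rw [if_neg h, if_neg h, mul_zero]
    rw [hpull, hC]
  rw [hLHS, ← hA, hB, Finset.sum_filter, Finset.mul_sum]
  apply Finset.sum_congr rfl
  intro F _
  by_cases hcol : (SimpleGraph.fromEdgeSet (↑F : Set (Sym2 V))).Colorable 2
  · rw [if_pos hcol, if_pos hcol]; ring
  · rw [if_neg hcol, if_neg hcol]; ring
end

section
/- Any connected graph G = (V,E) with nonempty vertex set satisfies ∑_{W ⊆ V} (−1)^{|W|} D(G[W], x) = 1 + (−x)^{|V|}, where G[W] is the subgraph of G induced by W. -/
open Finset Polynomial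

variable {V : Type*}

section aux
variable [Fintype V] [DecidableEq V] (G : SimpleGraph V)

open scoped Classical

/-- closed neighborhood of a finset -/
noncomputable def clN (T : Finset V) : Finset V :=
  T ∪ univ.filter (fun v => ∃ u ∈ T, G.Adj u v)

lemma mem_clN {T : Finset V} {v : V} : v ∈ clN G T ↔ v ∈ T ∨ ∃ u ∈ T, G.Adj u v := by
  simp [clN]

lemma subset_clN (T : Finset V) : T ⊆ clN G T := fun v hv => (mem_clN G).2 (Or.inl hv)

lemma domPoly_induce (W : Finset V) :
    domPoly (G.induce (↑W : Set V)) =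
      ∑ T ∈ W.powerset.filter (fun T => W ⊆ clN G T), X ^ T.card := by
  classical
  unfold domPoly
  refine Finset.sum_nbij' (i := fun T' => T'.map (Function.Embedding.subtype _))
    (j := fun T => T.subtype (fun v => v ∈ (↑W : Set V))) ?_ ?_ ?_ ?_ ?_
  · intro T' hT'
    simp only [mem_filter, mem_powerset] at hT' ⊢
    obtain ⟨-, hdom⟩ := hT'
    constructor
    · intro v hv
      obtain ⟨v', -, rfl⟩ := Finset.mem_map.1 hv
      exact v'.2
    · intro v hv
      rcases hdom ⟨v, hv⟩ with h | ⟨u, hu, hadj⟩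
      · exact (mem_clN G).2 (Or.inl (Finset.mem_map.2 ⟨_, h, rfl⟩))
      · exact (mem_clN G).2 (Or.inr ⟨u, Finset.mem_map.2 ⟨_, hu, rfl⟩, hadj⟩)
  · intro T hT
    simp only [mem_filter, mem_powerset] at hT ⊢
    obtain ⟨hsub, hdom⟩ := hT
    refine ⟨Finset.subset_univ _, ?_⟩
    rintro ⟨v, hv⟩
    rcases (mem_clN G).1 (hdom hv) with h | ⟨u, hu, hadj⟩
    · exact Or.inl (Finset.mem_subtype.2 h)
    · exact Or.inr ⟨⟨u, hsub hu⟩, Finset.mem_subtype.2 hu, hadj⟩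
  · intro T' hT'
    ext x
    simp only [Finset.mem_subtype, Finset.mem_map, Function.Embedding.coe_subtype]
    constructor
    · rintro ⟨a, ha, e⟩
      rwa [show a = x from Subtype.ext e] at ha
    · intro h
      exact ⟨x, h, rfl⟩
  · intro T hT
    simp only [mem_filter, mem_powerset] at hT
    exact Finset.subtype_map_of_mem hT.1
  · intro T' hT'
    rw [Finset.card_map]

lemma closed_eq_empty_or_univ (hConn : G.Connected) {T : Finset V} (hcl : clN G T ⊆ T) :
    T = ∅ ∨ T = univ := by
  rcases T.eq_empty_or_nonempty with h | ⟨v, hv⟩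
  · exact Or.inl h
  · right
    apply Finset.eq_univ_of_forall
    intro w
    have key : ∀ {a b : V} (_ : G.Walk a b), a ∈ T → b ∈ T := by
      intro a b p
      induction p with
      | nil => exact id
      | cons hadj p ih =>
          intro ha
          exact ih (hcl ((mem_clN G).2 (Or.inr ⟨_, ha, hadj⟩)))
    obtain ⟨p⟩ := hConn.preconnected v w
    exact key p hv

end aux

/-- for a connected graph, the alternating sum of the domination
polynomials of the vertex-induced subgraphs equals `1 + (-x)^|V|`. -/
theorem stmt_8 [Fintype V] [DecidableEq V] (G : SimpleGraph V) (hConn : G.Connected) :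
    ∑ W ∈ (Finset.univ : Finset V).powerset,
        (-1 : Polynomial ℤ) ^ W.card * domPoly (G.induce (↑W : Set V))
      = 1 + (-X) ^ Fintype.card V := by
  classical
  have step1 : ∀ W ∈ (Finset.univ : Finset V).powerset,
      (-1 : Polynomial ℤ) ^ W.card * domPoly (G.induce (↑W : Set V)) =
      ∑ T ∈ (Finset.univ : Finset V).powerset,
        if T ⊆ W ∧ W ⊆ clN G T then (-1 : Polynomial ℤ) ^ W.card * X ^ T.card else 0 := by
    intro W _
    rw [domPoly_induce, Finset.mul_sum, ← Finset.sum_filter]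
    congr 1
    ext T
    simp only [mem_filter, mem_powerset, Finset.subset_univ, true_and]
  rw [Finset.sum_congr rfl step1, Finset.sum_comm]
  have step2 : ∀ T ∈ (Finset.univ : Finset V).powerset,
      (∑ W ∈ (Finset.univ : Finset V).powerset,
        if T ⊆ W ∧ W ⊆ clN G T then (-1 : Polynomial ℤ) ^ W.card * X ^ T.card else 0)
      = (if clN G T ⊆ T then (-1 : Polynomial ℤ) ^ T.card * X ^ T.card else 0) := by
    intro T _
    rw [← Finset.sum_filter]
    have hset : (Finset.univ : Finset V).powerset.filter
        (fun W => T ⊆ W ∧ W ⊆ clN G T) = Finset.Icc T (clN G T) := by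
      ext W
      simp only [mem_filter, mem_powerset, Finset.subset_univ, true_and, Finset.mem_Icc]
    rw [hset]
    have reidx : ∑ W ∈ Finset.Icc T (clN G T), (-1 : Polynomial ℤ) ^ W.card * X ^ T.card
        = ∑ U ∈ (clN G T \ T).powerset,
            (-1 : Polynomial ℤ) ^ (T.card + U.card) * X ^ T.card := by
      refine Finset.sum_nbij' (i := fun W => W \ T) (j := fun U => T ∪ U) ?_ ?_ ?_ ?_ ?_
      · intro W hW
        rw [Finset.mem_Icc] at hW
        exact Finset.mem_powerset.2 (Finset.sdiff_subset_sdiff hW.2 le_rfl)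
      · intro U hU
        rw [Finset.mem_powerset] at hU
        rw [Finset.mem_Icc]
        exact ⟨Finset.subset_union_left, Finset.union_subset (subset_clN G T)
          (hU.trans Finset.sdiff_subset)⟩
      · intro W hW
        rw [Finset.mem_Icc] at hW
        exact Finset.union_sdiff_of_subset hW.1
      · intro U hU
        rw [Finset.mem_powerset] at hU
        exact Finset.union_sdiff_cancel_left
          (Finset.disjoint_sdiff.mono_right hU)
      · intro W hW
        rw [Finset.mem_Icc] at hW
        congr 2
        rw [← Finset.card_sdiff_add_card_eq_card hW.1, add_comm]
    rw [reidx]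
    have pull : ∑ U ∈ (clN G T \ T).powerset,
        (-1 : Polynomial ℤ) ^ (T.card + U.card) * X ^ T.card
        = ((-1 : Polynomial ℤ) ^ T.card * X ^ T.card) *
            ∑ U ∈ (clN G T \ T).powerset, (-1 : Polynomial ℤ) ^ U.card := by
      rw [Finset.mul_sum]
      apply Finset.sum_congr rfl
      intros
      rw [pow_add]; ring
    rw [pull]
    have hZ : ∑ U ∈ (clN G T \ T).powerset, (-1 : Polynomial ℤ) ^ U.card
        = ((if (clN G T \ T) = ∅ then 1 else 0 : ℤ) : Polynomial ℤ) := by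
      rw [← Finset.sum_powerset_neg_one_pow_card]
      push_cast
      rfl
    rw [hZ]
    by_cases h : clN G T ⊆ T
    · rw [if_pos h, if_pos (Finset.sdiff_eq_empty_iff_subset.2 h)]
      simp
    · rw [if_neg h, if_neg (fun he => h (Finset.sdiff_eq_empty_iff_subset.1 he))]
      simp
  rw [Finset.sum_congr rfl step2, ← Finset.sum_filter]
  have hfilter : (Finset.univ : Finset V).powerset.filter (fun T => clN G T ⊆ T)
      = {∅, (Finset.univ : Finset V)} := by
    ext T
    simp only [mem_filter, mem_powerset, Finset.subset_univ, true_and,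
      Finset.mem_insert, Finset.mem_singleton]
    constructor
    · exact closed_eq_empty_or_univ G hConn
    · rintro (rfl | rfl)
      · intro v hv
        rcases (mem_clN G).1 hv with h | ⟨u, hu, -⟩
        · exact h
        · exact absurd hu (Finset.notMem_empty u)
      · exact Finset.subset_univ _
  rw [hfilter]
  have hne : (∅ : Finset V) ≠ Finset.univ := by
    have : Nonempty V := hConn.nonempty
    simpa using (Finset.univ_nonempty (α := V)).ne_empty.symm
  rw [Finset.sum_pair hne]
  rw [Finset.card_empty, Finset.card_univ, pow_zero, pow_zero, mul_one, neg_pow (X : Polynomial ℤ)]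
end

section
/- For any graph G = (V,E), the domination polynomial satisfies D(G,x) = ∑_{W ⊆ V} ∏_{i ∈ λ_{G[W]}} (x^i + (−1)^i), where λ_{G[W]} is the multiset of orders of the connected components of the induced subgraph G[W] (the empty product for W = ∅ equals 1). -/
open Finset Polynomial

variable {V : Type*}

open scoped Classical in
lemma supp_card {α : Type*} [Fintype α] (H : SimpleGraph α) (c : H.ConnectedComponent) :
    Nat.card c.supp = (Finset.univ.filter (fun v => H.connectedComponentMk v = c)).card := by
  rw [Nat.card_eq_card_toFinset]
  congr 1
  ext v
  rw [Set.mem_toFinset]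
  simp [SimpleGraph.ConnectedComponent.supp]

open scoped Classical in
lemma walk_closed {α : Type*} (H : SimpleGraph α) (S : Finset α)
    (hS : ∀ u ∈ S, ∀ v ∉ S, ¬ H.Adj u v) {a b : α} (w : H.Walk a b) :
    a ∈ S → b ∈ S := by
  induction w with
  | nil => exact id
  | cons h p ih =>
    intro ha
    apply ih
    by_contra hy
    exact hS _ ha _ hy h

open scoped Classical in
lemma reach_closed {α : Type*} (H : SimpleGraph α) (S : Finset α)
    (hS : ∀ u ∈ S, ∀ v ∉ S, ¬ H.Adj u v) {a b : α} (hr : H.Reachable a b)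
    (ha : a ∈ S) : b ∈ S := by
  obtain ⟨w⟩ := hr
  exact walk_closed H S hS w ha

open scoped Classical in
lemma lemma1 {α : Type*} [Fintype α] (H : SimpleGraph α)
    (p : Finset α → Prop) [DecidablePred p]
    (hp : ∀ A, p A ↔ ∀ u ∈ A, ∀ v ∉ A, ¬ H.Adj u v) :
    ((compOrders H).map (fun i => (X : Polynomial ℤ) ^ i + (-1) ^ i)).prod
      = ∑ A ∈ Finset.univ.powerset.filter p,
          (-1) ^ (Fintype.card α - A.card) * X ^ A.card := by
  classical
  have h1 : ((compOrders H).map (fun i => (X : Polynomial ℤ) ^ i + (-1) ^ i)).prod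
      = ∏ c : H.ConnectedComponent,
          ((X : Polynomial ℤ) ^ (Nat.card c.supp) + (-1) ^ (Nat.card c.supp)) := by
    rw [compOrders, Multiset.map_map]
    rfl
  rw [h1, Finset.prod_add]
  -- define the map t ↦ St t
  set St : Finset H.ConnectedComponent → Finset α :=
    fun t => Finset.univ.filter (fun v => H.connectedComponentMk v ∈ t) with hSt
  have hfiber : ∀ (t : Finset H.ConnectedComponent), ∀ c ∈ t,
      ((St t).filter (fun v => H.connectedComponentMk v = c)).card
        = Nat.card c.supp := by
    intro t c hc
    rw [supp_card]
    congr 1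
    ext v
    simp only [hSt, Finset.mem_filter, Finset.mem_univ, true_and]
    constructor
    · rintro ⟨-, h⟩; exact h
    · rintro h; exact ⟨h ▸ hc, h⟩
  have hcardSt : ∀ t, (St t).card = ∑ c ∈ t, Nat.card c.supp := by
    intro t
    rw [Finset.card_eq_sum_card_fiberwise (f := H.connectedComponentMk) (t := t)
      (fun v hv => by simpa [hSt] using hv)]
    exact Finset.sum_congr rfl (hfiber t)
  have htotal : ∑ c : H.ConnectedComponent, Nat.card c.supp = Fintype.card α := by
    have := hcardSt Finset.univ
    simp only [hSt, Finset.mem_univ, Finset.filter_true] at this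
    · rw [← this]; simp [hSt]
  refine Finset.sum_bij (fun t _ => St t) ?_ ?_ ?_ ?_
  · intro t _
    rw [Finset.mem_filter, hp]
    refine ⟨Finset.mem_powerset.2 (Finset.subset_univ _), ?_⟩
    intro u hu v hv hadj
    apply hv
    show v ∈ St t
    simp only [hSt, Finset.mem_filter, Finset.mem_univ, true_and] at hu ⊢
    exact (SimpleGraph.ConnectedComponent.connectedComponentMk_eq_of_adj hadj) ▸ hu
  · intro t1 _ t2 _ heq
    have heq' : St t1 = St t2 := heq
    ext c
    obtain ⟨v, hv⟩ := c.exists_rep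
    have hv' : H.connectedComponentMk v = c := hv
    constructor <;> intro hc
    · have h3 : v ∈ St t1 := by
        simp only [hSt, Finset.mem_filter, Finset.mem_univ, true_and, hv']
        exact hc
      rw [heq'] at h3
      simp only [hSt, Finset.mem_filter, Finset.mem_univ, true_and, hv'] at h3
      exact h3
    · have h3 : v ∈ St t2 := by
        simp only [hSt, Finset.mem_filter, Finset.mem_univ, true_and, hv']
        exact hc
      rw [← heq'] at h3
      simp only [hSt, Finset.mem_filter, Finset.mem_univ, true_and, hv'] at h3
      exact h3
  · intro S hS
    rw [Finset.mem_filter, hp] at hS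
    obtain ⟨-, hsep⟩ := hS
    refine ⟨S.image H.connectedComponentMk, Finset.mem_univ _, ?_⟩
    ext v
    simp only [hSt, Finset.mem_filter, Finset.mem_univ, true_and, Finset.mem_image]
    constructor
    · rintro ⟨u, hu, hcu⟩
      exact reach_closed H S hsep (SimpleGraph.ConnectedComponent.exact hcu) hu
    · intro hv; exact ⟨v, hv, rfl⟩
  · intro t _
    show _ = (-1) ^ (Fintype.card α - (St t).card) * X ^ (St t).card
    rw [Finset.prod_pow_eq_pow_sum, Finset.prod_pow_eq_pow_sum, mul_comm, hcardSt]
    have h2 : ∑ c ∈ Finset.univ \ t, Nat.card c.supp + ∑ c ∈ t, Nat.card c.supp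
        = Fintype.card α := by
      rw [Finset.sum_sdiff (Finset.subset_univ t), htotal]
    congr 2
    omega


lemma lemma2 {V : Type*} [Fintype V] [DecidableEq V] (G : SimpleGraph V) (W : Finset V)
    (q : Finset V → Prop) [DecidablePred q]
    (hq : ∀ S, q S ↔ ∀ u ∈ S, ∀ v ∈ W, v ∉ S → ¬ G.Adj u v) :
    ((compOrders (G.induce (↑W : Set V))).map
        (fun i => (X : Polynomial ℤ) ^ i + (-1) ^ i)).prod
      = ∑ S ∈ W.powerset.filter q, (-1) ^ (W.card - S.card) * X ^ S.card := by
  classical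
  rw [lemma1 (G.induce (↑W : Set V))
    (fun A => ∀ u ∈ A, ∀ v ∉ A, ¬ (G.induce (↑W : Set V)).Adj u v) (fun A => Iff.rfl)]
  have hcard : Fintype.card ↥(↑W : Set V) = W.card := by
    rw [← Nat.card_eq_fintype_card, Nat.card_coe_set_eq, Set.ncard_coe_finset]
  refine Finset.sum_bij
    (fun (A : Finset ↥(↑W : Set V)) _ => A.map (Function.Embedding.subtype _)) ?_ ?_ ?_ ?_
  · intro A hA
    have hsep := (Finset.mem_filter.1 hA).2
    rw [Finset.mem_filter, hq]
    constructor
    · rw [Finset.mem_powerset]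
      intro v hv
      rw [Finset.mem_map] at hv
      obtain ⟨v', -, rfl⟩ := hv
      exact v'.2
    · intro u hu v hvW hv hadj
      rw [Finset.mem_map] at hu
      obtain ⟨u', hu', rfl⟩ := hu
      have hv' : (⟨v, hvW⟩ : ↥(↑W : Set V)) ∉ A := by
        intro h
        exact hv (Finset.mem_map.2 ⟨⟨v, hvW⟩, h, rfl⟩)
      exact hsep u' hu' _ hv' hadj
  · intro A1 _ A2 _ heq
    exact Finset.map_injective _ heq
  · intro S hS
    rw [Finset.mem_filter, Finset.mem_powerset, hq] at hS
    obtain ⟨hSW, hsep⟩ := hS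
    refine ⟨Finset.univ.filter (fun v : ↥(↑W : Set V) => ↑v ∈ S), ?_, ?_⟩
    · rw [Finset.mem_filter]
      refine ⟨Finset.mem_powerset.2 (Finset.subset_univ _), ?_⟩
      intro u hu v hv hadj
      rw [Finset.mem_filter] at hu hv
      exact hsep ↑u (by simpa using hu) ↑v v.2 (by simpa using hv) hadj
    · ext v
      rw [Finset.mem_map]
      constructor
      · rintro ⟨v', hv', rfl⟩
        rw [Finset.mem_filter] at hv'
        exact hv'.2
      · intro hv
        exact ⟨⟨v, hSW hv⟩, by simp [hv], rfl⟩
  · intro A _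
    rw [Finset.card_map, hcard]

/-- `D(G,x) = ∑_{W ⊆ V} ∏_{i ∈ λ_{G[W]}} (x^i + (-1)^i)`. -/
theorem stmt_10 [Fintype V] [DecidableEq V] (G : SimpleGraph V) :
    domPoly G
      = ∑ W ∈ (Finset.univ : Finset V).powerset,
          ((compOrders (G.induce (↑W : Set V))).map
            (fun i => (X : Polynomial ℤ) ^ i + (-1) ^ i)).prod := by
  classical
  have hrw : ∀ W ∈ (Finset.univ : Finset V).powerset,
      ((compOrders (G.induce (↑W : Set V))).map
        (fun i => (X : Polynomial ℤ) ^ i + (-1) ^ i)).prod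
      = ∑ S ∈ W.powerset.filter (fun S => ∀ u ∈ S, ∀ v ∈ W, v ∉ S → ¬ G.Adj u v),
          (-1) ^ (W.card - S.card) * X ^ S.card :=
    fun W _ => lemma2 G W _ (fun S => Iff.rfl)
  rw [Finset.sum_congr rfl hrw]
  have step2 : ∀ W ∈ (Finset.univ : Finset V).powerset,
      (∑ S ∈ W.powerset.filter (fun S => ∀ u ∈ S, ∀ v ∈ W, v ∉ S → ¬ G.Adj u v),
          ((-1 : Polynomial ℤ)) ^ (W.card - S.card) * X ^ S.card)
      = ∑ S ∈ (Finset.univ : Finset V).powerset,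
          if S ⊆ W ∧ (∀ u ∈ S, ∀ v ∈ W, v ∉ S → ¬ G.Adj u v) then
            ((-1 : Polynomial ℤ)) ^ (W.card - S.card) * X ^ S.card else 0 := by
    intro W _
    rw [← Finset.sum_filter]
    congr 1
    ext S
    simp only [Finset.mem_filter, Finset.mem_powerset]
    constructor
    · rintro ⟨h1, h2⟩; exact ⟨Finset.subset_univ _, h1, h2⟩
    · rintro ⟨-, h1, h2⟩; exact ⟨h1, h2⟩
  rw [Finset.sum_congr rfl step2, Finset.sum_comm]
  have step3 : ∀ S ∈ (Finset.univ : Finset V).powerset,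
      (∑ W ∈ (Finset.univ : Finset V).powerset,
          if S ⊆ W ∧ (∀ u ∈ S, ∀ v ∈ W, v ∉ S → ¬ G.Adj u v) then
            ((-1 : Polynomial ℤ)) ^ (W.card - S.card) * X ^ S.card else 0)
      = (if dominates G S then 1 else 0) * X ^ S.card := by
    intro S _
    rw [← Finset.sum_filter]
    set N : Finset V := Finset.univ.filter (fun v => v ∉ S ∧ ∀ u ∈ S, ¬ G.Adj u v) with hN
    have hNS : ∀ v ∈ N, v ∉ S ∧ ∀ u ∈ S, ¬ G.Adj u v := by
      intro v hv
      simpa [hN] using hv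
    have key : (∑ W ∈ Finset.univ.powerset.filter
          (fun W => S ⊆ W ∧ ∀ u ∈ S, ∀ v ∈ W, v ∉ S → ¬ G.Adj u v),
          ((-1 : Polynomial ℤ)) ^ (W.card - S.card) * X ^ S.card)
        = ∑ T ∈ N.powerset, ((-1 : Polynomial ℤ)) ^ T.card * X ^ S.card := by
      refine Finset.sum_bij (fun W _ => W \ S) ?_ ?_ ?_ ?_
      · intro W hW
        obtain ⟨hSW, hsep⟩ := (Finset.mem_filter.1 hW).2
        rw [Finset.mem_powerset]
        intro v hv
        rw [Finset.mem_sdiff] at hv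
        simp only [hN, Finset.mem_filter, Finset.mem_univ, true_and]
        exact ⟨hv.2, fun u hu => hsep u hu v hv.1 hv.2⟩
      · intro W1 h1 W2 h2 heq
        have hS1 : S ⊆ W1 := ((Finset.mem_filter.1 h1).2).1
        have hS2 : S ⊆ W2 := ((Finset.mem_filter.1 h2).2).1
        have heq' : W1 \ S = W2 \ S := heq
        rw [← Finset.sdiff_union_of_subset hS1, ← Finset.sdiff_union_of_subset hS2, heq']
      · intro T hT
        rw [Finset.mem_powerset] at hT
        have hTS : ∀ v ∈ T, v ∉ S := fun v hv => (hNS v (hT hv)).1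
        refine ⟨T ∪ S, ?_, ?_⟩
        · rw [Finset.mem_filter]
          refine ⟨Finset.mem_powerset.2 (Finset.subset_univ _),
            Finset.subset_union_right, ?_⟩
          intro u hu v hv hvS hadj
          rcases Finset.mem_union.1 hv with hvT | hvS'
          · exact (hNS v (hT hvT)).2 u hu hadj
          · exact hvS hvS'
        · ext v
          rw [Finset.mem_sdiff, Finset.mem_union]
          constructor
          · rintro ⟨hv | hv, hvS⟩
            · exact hv
            · exact absurd hv hvS
          · intro hv
            exact ⟨Or.inl hv, hTS v hv⟩
      · intro W hW
        have hSW : S ⊆ W := ((Finset.mem_filter.1 hW).2).1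
        rw [Finset.card_sdiff_of_subset hSW]
    rw [key, ← Finset.sum_mul]
    congr 1
    have hC : (∑ T ∈ N.powerset, ((-1 : Polynomial ℤ)) ^ T.card)
        = C (∑ T ∈ N.powerset, ((-1 : ℤ)) ^ T.card) := by
      rw [map_sum]
      exact Finset.sum_congr rfl (fun T _ => by simp)
    rw [hC, Finset.sum_powerset_neg_one_pow_card]
    have hdom : N = ∅ ↔ dominates G S := by
      rw [Finset.eq_empty_iff_forall_notMem]
      constructor
      · intro h v
        by_cases hv : v ∈ S
        · exact Or.inl hv
        · right
          have hv2 := h v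
          simp only [hN, Finset.mem_filter, Finset.mem_univ, true_and, not_and] at hv2
          have := hv2 hv
          push_neg at this
          exact this
      · intro hd v
        simp only [hN, Finset.mem_filter, Finset.mem_univ, true_and, not_and]
        intro hvS
        push_neg
        rcases hd v with h | h
        · exact absurd h hvS
        · exact h
    rw [if_congr hdom rfl rfl]
    split_ifs <;> simp
  rw [Finset.sum_congr rfl step3]
  unfold domPoly
  rw [Finset.sum_filter]
  refine Finset.sum_congr rfl (fun S _ => ?_)
  by_cases h : dominates G S
  · simp [h]
  · simp [h]
end

section
/- Let G be a finite graph. Call an induced subgraph H of G conformal if every connected component of H has an even number of vertices (the empty subgraph is conformal). Then the number of dominating sets of G equals ∑_{H ∈ Con(G)} 2^{k(H)}, where Con(G) is the set of vertex-induced conformal subgraphs of G and k(H) is the number of connected components of H. -/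
open Finset Polynomial

variable {V : Type*}

open scoped Classical

namespace Stmt11Aux

variable {α : Type*} [Fintype α]

/-- A set of vertices closed under adjacency (no edges leaving it). -/
def Closed (H : SimpleGraph α) (T : Finset α) : Prop :=
  ∀ a ∈ T, ∀ b ∉ T, ¬ H.Adj a b

omit [Fintype α] in
lemma closed_walk {H : SimpleGraph α} {T : Finset α} (hT : Closed H T) :
    ∀ {a b : α}, H.Walk a b → a ∈ T → b ∈ T := by
  intro a b w
  induction w with
  | nil => exact id
  | @cons u v w h p ih =>
      intro hu
      refine ih ?_
      by_contra hv
      exact hT _ hu _ hv h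

lemma supp_card (H : SimpleGraph α) (c : H.ConnectedComponent) :
    Nat.card c.supp
      = (Finset.univ.filter (fun a => H.connectedComponentMk a = c)).card := by
  rw [Nat.card_eq_fintype_card, ← Set.toFinset_card]
  congr 1
  ext a
  simp [SimpleGraph.ConnectedComponent.mem_supp_iff]

lemma core (H : SimpleGraph α) :
    (∑ T ∈ (Finset.univ : Finset α).powerset.filter (fun T => Closed H T),
        (-1 : ℤ) ^ T.card)
      = ∏ c : H.ConnectedComponent, ((-1 : ℤ) ^ Nat.card c.supp + 1) := by
  rw [Finset.prod_add]
  simp only [Finset.prod_const_one, mul_one]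
  refine (Finset.sum_nbij'
    (fun A => Finset.univ.filter (fun a => H.connectedComponentMk a ∈ A))
    (fun T => T.image H.connectedComponentMk) ?_ ?_ ?_ ?_ ?_).symm
  · -- maps into closed sets
    intro A _
    simp only [Finset.mem_filter, Finset.mem_powerset, Finset.subset_univ, true_and]
    intro a ha b hb hadj
    simp only [Finset.mem_filter, Finset.mem_univ, true_and] at ha hb
    exact hb (by rwa [← SimpleGraph.ConnectedComponent.sound hadj.reachable])
  · intro T _
    exact Finset.mem_powerset.mpr (Finset.subset_univ _)
  · -- left inverse
    intro A _
    ext c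
    simp only [Finset.mem_image, Finset.mem_filter, Finset.mem_univ, true_and]
    constructor
    · rintro ⟨a, ha, rfl⟩; exact ha
    · intro hc
      obtain ⟨a, rfl⟩ := c.exists_rep
      exact ⟨a, hc, rfl⟩
  · -- right inverse
    intro T hT
    simp only [Finset.mem_filter, Finset.mem_powerset] at hT
    ext a
    simp only [Finset.mem_filter, Finset.mem_univ, true_and, Finset.mem_image]
    constructor
    · rintro ⟨b, hb, hba⟩
      obtain ⟨w⟩ := (SimpleGraph.ConnectedComponent.eq).mp hba
      exact closed_walk hT.2 w hb
    · intro ha; exact ⟨a, ha, rfl⟩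
  · -- values
    intro A _
    have hcard : (Finset.univ.filter (fun a => H.connectedComponentMk a ∈ A)).card
        = ∑ c ∈ A, (Finset.univ.filter (fun a => H.connectedComponentMk a = c)).card := by
      rw [Finset.card_eq_sum_card_fiberwise
        (f := H.connectedComponentMk) (t := A)
        (s := Finset.univ.filter (fun a => H.connectedComponentMk a ∈ A))
        (fun a ha => (Finset.mem_filter.mp ha).2)]
      refine Finset.sum_congr rfl fun c hc => ?_
      congr 1
      ext a
      simp only [Finset.mem_filter, Finset.mem_univ, true_and]
      constructor
      · rintro ⟨-, h⟩; exact h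
      · intro h; exact ⟨h ▸ hc, h⟩
    rw [hcard, ← Finset.prod_pow_eq_pow_sum]
    exact Finset.prod_congr rfl fun c _ => by rw [supp_card]

lemma core_even (H : SimpleGraph α)
    (h : ∀ c : H.ConnectedComponent, Even (Nat.card c.supp)) :
    (∑ T ∈ (Finset.univ : Finset α).powerset.filter (fun T => Closed H T),
        (-1 : ℤ) ^ T.card)
      = 2 ^ Nat.card H.ConnectedComponent := by
  rw [core]
  rw [Finset.prod_congr rfl (fun c _ => by rw [(h c).neg_one_pow] : ∀ c ∈ Finset.univ,
      ((-1 : ℤ) ^ Nat.card (c : H.ConnectedComponent).supp + 1) = 1 + 1)]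
  rw [Finset.prod_const, Finset.card_univ, Nat.card_eq_fintype_card]
  norm_num

lemma core_odd (H : SimpleGraph α)
    (h : ¬ ∀ c : H.ConnectedComponent, Even (Nat.card c.supp)) :
    (∑ T ∈ (Finset.univ : Finset α).powerset.filter (fun T => Closed H T),
        (-1 : ℤ) ^ T.card) = 0 := by
  rw [core]
  push_neg at h
  obtain ⟨c, hc⟩ := h
  refine Finset.prod_eq_zero (Finset.mem_univ c) ?_
  rw [(Nat.not_even_iff_odd.mp hc).neg_one_pow]
  ring

end Stmt11Aux

open Stmt11Aux

section VLevel

variable [Fintype V] [DecidableEq V]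

set_option maxHeartbeats 1000000 in
/-- Transport the closed-set sum from `Finset V` level to the induced subgraph. -/
lemma transport (G : SimpleGraph V) (S : Finset V) :
    (∑ T ∈ S.powerset.filter (fun T => ∀ t ∈ T, ∀ w ∈ S \ T, ¬ G.Adj t w),
        (-1 : ℤ) ^ T.card)
      = ∑ T' ∈ (Finset.univ : Finset (↑S : Set V)).powerset.filter
          (fun T' => Closed (G.induce (↑S : Set V)) T'),
          (-1 : ℤ) ^ T'.card := by
  refine Finset.sum_nbij' (fun T => T.subtype (fun x => x ∈ (↑S : Set V)))
    (fun T' => T'.map (Function.Embedding.subtype _)) ?_ ?_ ?_ ?_ ?_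
  · intro T hT
    simp only [Finset.mem_filter, Finset.mem_powerset] at hT ⊢
    refine ⟨Finset.subset_univ _, ?_⟩
    intro a ha b hb hadj
    rw [Finset.mem_subtype] at ha hb
    have hbS : (b : V) ∈ S := by exact_mod_cast b.2
    exact hT.2 _ ha _ (Finset.mem_sdiff.mpr ⟨hbS, hb⟩) hadj
  · intro T' hT'
    simp only [Finset.mem_filter, Finset.mem_powerset] at hT' ⊢
    constructor
    · intro x hx
      obtain ⟨a, _, rfl⟩ := Finset.mem_map.mp hx
      exact_mod_cast a.2
    · intro t ht w hw hadj
      obtain ⟨a, ha, rfl⟩ := Finset.mem_map.mp ht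
      rw [Finset.mem_sdiff] at hw
      have hb : w ∈ (↑S : Set V) := hw.1
      have hbT : (⟨w, hb⟩ : (↑S : Set V)) ∉ T' := by
        intro hmem
        exact hw.2 (Finset.mem_map.mpr ⟨⟨w, hb⟩, hmem, rfl⟩)
      exact hT'.2 a ha ⟨w, hb⟩ hbT hadj
  · -- left inverse
    intro T hT
    simp only [Finset.mem_filter, Finset.mem_powerset] at hT
    show (T.subtype _).map _ = T
    rw [Finset.subtype_map]
    exact Finset.filter_true_of_mem fun x hx => Finset.mem_coe.mpr (hT.1 hx)
  · -- right inverse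
    intro T' _
    ext a
    simp only [Finset.mem_subtype, Finset.mem_map, Function.Embedding.coe_subtype]
    constructor
    · rintro ⟨b, hb, hba⟩
      rwa [← Subtype.coe_injective hba]
    · intro ha; exact ⟨a, ha, rfl⟩
  · intro T hT
    simp only [Finset.mem_filter, Finset.mem_powerset] at hT
    rw [Finset.card_subtype, Finset.filter_true_of_mem
      fun x hx => Finset.mem_coe.mpr (hT.1 hx)]

lemma perS_even (G : SimpleGraph V) (S : Finset V)
    (h : ∀ c : (G.induce (↑S : Set V)).ConnectedComponent, Even (Nat.card c.supp)) :
    (∑ T ∈ S.powerset.filter (fun T => ∀ t ∈ T, ∀ w ∈ S \ T, ¬ G.Adj t w),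
        (-1 : ℤ) ^ T.card)
      = 2 ^ Nat.card (G.induce (↑S : Set V)).ConnectedComponent := by
  rw [transport]; exact core_even _ h

lemma perS_odd (G : SimpleGraph V) (S : Finset V)
    (h : ¬ ∀ c : (G.induce (↑S : Set V)).ConnectedComponent, Even (Nat.card c.supp)) :
    (∑ T ∈ S.powerset.filter (fun T => ∀ t ∈ T, ∀ w ∈ S \ T, ¬ G.Adj t w),
        (-1 : ℤ) ^ T.card) = 0 := by
  rw [transport]; exact core_odd _ h

end VLevel

set_option maxHeartbeats 1000000 in
open scoped Classical in
/-- `d(G) = ∑_{H ∈ Con(G)} 2^{k(H)}`, the sum over vertex-induced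
conformal subgraphs (all components of even order), `k` = number of components. -/
theorem stmt_11 [Fintype V] [DecidableEq V] (G : SimpleGraph V) :
    (Finset.univ.powerset.filter (fun W => dominates G W)).card
      = ∑ W ∈ (Finset.univ : Finset V).powerset.filter
          (fun W : Finset V => ∀ i ∈ compOrders (G.induce (↑W : Set V)), Even i),
          2 ^ Nat.card (G.induce (↑W : Set V)).ConnectedComponent := by
  have hpow : ∀ s : Finset V, s.powerset
      = (Finset.univ : Finset V).powerset.filter (fun T => T ⊆ s) := by
    intro s; ext t; simp
  set pow := (Finset.univ : Finset V).powerset with hp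
  have stepA : ((pow.filter (fun W => dominates G W)).card : ℤ)
      = ∑ W ∈ pow, ∑ T ∈ pow,
          if (∀ t ∈ T, t ∉ W ∧ ∀ u ∈ W, ¬ G.Adj u t) then (-1 : ℤ) ^ T.card else 0 := by
    rw [← Finset.sum_boole]
    refine Finset.sum_congr rfl fun W _ => ?_
    have hbad : (Finset.univ.filter (fun v => ¬ (v ∈ W ∨ ∃ u ∈ W, G.Adj u v))) = ∅
        ↔ dominates G W := by
      rw [Finset.filter_eq_empty_iff]
      constructor
      · intro h v; exact not_not.mp (h (Finset.mem_univ v))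
      · intro h v _; exact not_not.mpr (h v)
    calc (if dominates G W then (1 : ℤ) else 0)
        = ∑ T ∈ (Finset.univ.filter (fun v => ¬ (v ∈ W ∨ ∃ u ∈ W, G.Adj u v))).powerset,
            (-1 : ℤ) ^ T.card := by
          rw [Finset.sum_powerset_neg_one_pow_card]
          exact (if_congr hbad rfl rfl).symm
      _ = ∑ T ∈ pow.filter (fun T => T ⊆ Finset.univ.filter
              (fun v => ¬ (v ∈ W ∨ ∃ u ∈ W, G.Adj u v))), (-1 : ℤ) ^ T.card := by
          rw [hpow]
      _ = ∑ T ∈ pow, if (∀ t ∈ T, t ∉ W ∧ ∀ u ∈ W, ¬ G.Adj u t)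
            then (-1 : ℤ) ^ T.card else 0 := by
          rw [Finset.sum_filter]
          refine Finset.sum_congr rfl fun T _ => ?_
          refine if_congr ?_ rfl rfl
          constructor
          · intro hsub t ht
            have := hsub ht
            simp only [Finset.mem_filter, Finset.mem_univ, true_and] at this
            push_neg at this; exact this
          · intro h t ht
            simp only [Finset.mem_filter, Finset.mem_univ, true_and]
            push_neg; exact h t ht
  have stepB : (∑ W ∈ pow, ∑ T ∈ pow,
        if (∀ t ∈ T, t ∉ W ∧ ∀ u ∈ W, ¬ G.Adj u t) then (-1 : ℤ) ^ T.card else 0)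
      = ∑ p ∈ (pow ×ˢ pow).filter
          (fun p => ∀ t ∈ p.2, t ∉ p.1 ∧ ∀ u ∈ p.1, ¬ G.Adj u t),
          (-1 : ℤ) ^ p.2.card := by
    rw [Finset.sum_filter, Finset.sum_product]
  have stepC : (∑ p ∈ (pow ×ˢ pow).filter
          (fun p => ∀ t ∈ p.2, t ∉ p.1 ∧ ∀ u ∈ p.1, ¬ G.Adj u t),
          (-1 : ℤ) ^ p.2.card)
      = ∑ p ∈ (pow ×ˢ pow).filter
          (fun p => p.2 ⊆ p.1 ∧ ∀ t ∈ p.2, ∀ w ∈ p.1 \ p.2, ¬ G.Adj t w),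
          (-1 : ℤ) ^ p.2.card := by
    refine Finset.sum_nbij' (fun p => (p.1 ∪ p.2, p.2)) (fun p => (p.1 \ p.2, p.2))
      ?_ ?_ ?_ ?_ ?_
    · intro p hp
      simp only [Finset.mem_filter, Finset.mem_product, Finset.mem_powerset] at hp ⊢
      refine ⟨⟨Finset.mem_powerset.mpr (Finset.subset_univ _), hp.1.2⟩,
        Finset.subset_union_right, ?_⟩
      intro t ht w hw
      rw [Finset.mem_sdiff, Finset.mem_union] at hw
      have hw1 : w ∈ p.1 := by
        rcases hw.1 with h | h
        · exact h
        · exact absurd h hw.2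
      exact fun hadj => (hp.2 t ht).2 w hw1 hadj.symm
    · intro p hp
      simp only [Finset.mem_filter, Finset.mem_product, Finset.mem_powerset] at hp ⊢
      refine ⟨⟨Finset.mem_powerset.mpr (Finset.subset_univ _), hp.1.2⟩, ?_⟩
      intro t ht
      refine ⟨fun hmem => (Finset.mem_sdiff.mp hmem).2 ht, ?_⟩
      intro u hu hadj
      exact hp.2.2 t ht u hu hadj.symm
    · intro p hp
      simp only [Finset.mem_filter, Finset.mem_product, Finset.mem_powerset] at hp
      have hdisj : Disjoint p.1 p.2 :=
        Finset.disjoint_right.mpr fun a ha => (hp.2 a ha).1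
      show ((p.1 ∪ p.2) \ p.2, p.2) = p
      rw [Finset.union_sdiff_cancel_right hdisj]
    · intro p hp
      simp only [Finset.mem_filter, Finset.mem_product, Finset.mem_powerset] at hp
      show (p.1 \ p.2 ∪ p.2, p.2) = p
      rw [Finset.sdiff_union_of_subset hp.2.1]
    · intro p _; rfl
  have stepD : (∑ p ∈ (pow ×ˢ pow).filter
          (fun p => p.2 ⊆ p.1 ∧ ∀ t ∈ p.2, ∀ w ∈ p.1 \ p.2, ¬ G.Adj t w),
          (-1 : ℤ) ^ p.2.card)
      = ∑ S ∈ pow, ∑ T ∈ S.powerset.filter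
          (fun T => ∀ t ∈ T, ∀ w ∈ S \ T, ¬ G.Adj t w), (-1 : ℤ) ^ T.card := by
    rw [Finset.sum_filter, Finset.sum_product]
    refine Finset.sum_congr rfl fun S _ => ?_
    rw [Finset.sum_filter, hpow S, Finset.sum_filter]
    refine Finset.sum_congr rfl fun T _ => ?_
    change (if T ⊆ S ∧ (∀ t ∈ T, ∀ w ∈ S \ T, ¬ G.Adj t w)
        then (-1 : ℤ) ^ T.card else 0) = _
    by_cases h1 : T ⊆ S
    · by_cases h2 : ∀ t ∈ T, ∀ w ∈ S \ T, ¬ G.Adj t w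
      · rw [if_pos ⟨h1, h2⟩, if_pos h1, if_pos h2]
      · rw [if_neg (fun hh => h2 hh.2), if_pos h1, if_neg h2]
    · rw [if_neg (fun hh => h1 hh.1), if_neg h1]
  have stepE : ∀ S ∈ pow, (∑ T ∈ S.powerset.filter
          (fun T => ∀ t ∈ T, ∀ w ∈ S \ T, ¬ G.Adj t w), (-1 : ℤ) ^ T.card)
      = if (∀ i ∈ compOrders (G.induce (↑S : Set V)), Even i)
          then (2 : ℤ) ^ Nat.card (G.induce (↑S : Set V)).ConnectedComponent else 0 := by
    intro S _
    have hiff : (∀ i ∈ compOrders (G.induce (↑S : Set V)), Even i)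
        ↔ ∀ c : (G.induce (↑S : Set V)).ConnectedComponent, Even (Nat.card c.supp) := by
      simp [compOrders]
    by_cases h : ∀ c : (G.induce (↑S : Set V)).ConnectedComponent, Even (Nat.card c.supp)
    · rw [if_pos (hiff.mpr h), perS_even G S h]
    · rw [if_neg (fun hh => h (hiff.mp hh)), perS_odd G S h]
  have final := stepA.trans (stepB.trans (stepC.trans (stepD.trans
    (Finset.sum_congr rfl stepE))))
  rw [← Finset.sum_filter] at final
  exact_mod_cast final
end

section
/- Let G = (V,E) be a graph and v ∈ V. Then d(G) − d(G−v) is even, where d denotes the number of dominating sets and G−v is the graph obtained by deleting v. -/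
open Finset Polynomial

variable {V : Type*}

open scoped Classical in
lemma dom_odd {V : Type*} [Fintype V] (H : SimpleGraph V) :
    (((Finset.univ.powerset.filter (fun W => dominates H W)).card : ZMod 2)) = 1 := by
  set good : Finset V × Finset V → Prop :=
    fun p => ∀ a ∈ p.1, ∀ b ∈ p.2, a ≠ b ∧ ¬ H.Adj a b with hgood
  set S : Finset (Finset V × Finset V) := Finset.univ.filter good with hS
  -- Step A : S.card = 1 in ZMod 2
  have hmemS : ∀ p, p ∈ S ↔ good p := by
    intro p; simp [hS]
  have hempty : ((∅, ∅) : Finset V × Finset V) ∈ S := by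
    rw [hmemS]; intro a ha; simp at ha
  have hsym : ∀ p, good p → good p.swap := by
    rintro ⟨A, B⟩ h a ha b hb
    obtain ⟨h1, h2⟩ := h b hb a ha
    exact ⟨h1.symm, fun hadj => h2 hadj.symm⟩
  have hA : ((S.card : ZMod 2)) = 1 := by
    have hcard : (S.erase (∅, ∅)).card + 1 = S.card :=
      Finset.card_erase_add_one hempty
    have heven : (((S.erase (∅, ∅)).card : ZMod 2)) = 0 := by
      have hsum : ∑ p ∈ S.erase (∅, ∅), (1 : ZMod 2) = 0 := by
        refine Finset.sum_involution (fun p _ => p.swap) (fun p hp => ?_)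
          (fun p hp _ => ?_) (fun p hp => ?_) (fun p hp => ?_)
        · decide
        · -- swap p ≠ p
          intro hswap
          have hp' := Finset.mem_erase.mp hp
          have hgp : good p := (hmemS p).mp hp'.2
          have h12 : p.2 = p.1 := congrArg Prod.fst hswap
          have : p.1 = ∅ := by
            by_contra hne
            obtain ⟨a, ha⟩ := Finset.nonempty_iff_ne_empty.mpr hne
            exact ((hgp a ha a (h12 ▸ ha)).1 rfl)
          exact hp'.1 (by rw [Prod.ext_iff]; exact ⟨this, h12.trans this⟩)
        · -- swap p ∈ erase
          have hp' := Finset.mem_erase.mp hp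
          refine Finset.mem_erase.mpr ⟨?_, (hmemS _).mpr (hsym p ((hmemS p).mp hp'.2))⟩
          intro h
          apply hp'.1
          have := congrArg Prod.swap h
          simpa using this
        · simp
      have : ((S.erase (∅, ∅)).card : ZMod 2) = ∑ p ∈ S.erase (∅, ∅), (1 : ZMod 2) := by
        simp
      rw [this, hsum]
    have := congrArg (fun n : ℕ => (n : ZMod 2)) hcard
    simp only [Nat.cast_add, Nat.cast_one] at this
    rw [← this, heven, zero_add]
  -- Step B : S.card ≡ number of dominating sets
  have hB : ((S.card : ZMod 2)) =
      ((Finset.univ.powerset.filter (fun W => dominates H W)).card : ZMod 2) := by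
    have h1 : S.card = ∑ A : Finset V, (Finset.univ.filter (fun B => good (A, B))).card := by
      rw [hS, Finset.card_filter]
      rw [← Finset.univ_product_univ, Finset.sum_product]
      congr 1
      ext A
      rw [Finset.card_filter]
    have h2 : ∀ A : Finset V,
        (Finset.univ.filter (fun B => good (A, B))) =
          (Finset.univ.filter (fun b => ∀ a ∈ A, a ≠ b ∧ ¬ H.Adj a b)).powerset := by
      intro A
      ext B
      simp only [Finset.mem_filter, Finset.mem_univ, true_and, Finset.mem_powerset, hgood]
      constructor
      · intro h b hb
        simp only [Finset.mem_filter, Finset.mem_univ, true_and]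
        exact fun a ha => h a ha b hb
      · intro h a ha b hb
        have hb' := h hb
        simp only [Finset.mem_filter, Finset.mem_univ, true_and] at hb'
        exact hb' a ha
    have h3 : ∀ A : Finset V,
        ((Finset.univ.filter (fun b => ∀ a ∈ A, a ≠ b ∧ ¬ H.Adj a b)).card = 0)
          ↔ dominates H A := by
      intro A
      rw [Finset.card_eq_zero, Finset.filter_eq_empty_iff]
      constructor
      · intro h v
        have := h (Finset.mem_univ v)
        push_neg at this
        obtain ⟨a, ha, h'⟩ := this
        by_cases hab : a = v
        · exact Or.inl (hab ▸ ha)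
        · exact Or.inr ⟨a, ha, h' hab⟩
      · intro hdom b _
        push_neg
        rcases hdom b with hb | ⟨u, hu, hadj⟩
        · exact ⟨b, hb, fun h => absurd rfl h⟩
        · exact ⟨u, hu, fun _ => hadj⟩
    have h4 : ∀ A : Finset V,
        (((Finset.univ.filter (fun B => good (A, B))).card : ZMod 2)) =
          if dominates H A then 1 else 0 := by
      intro A
      rw [h2 A, Finset.card_powerset]
      by_cases hd : dominates H A
      · have : (Finset.univ.filter (fun b => ∀ a ∈ A, a ≠ b ∧ ¬ H.Adj a b)).card = 0 :=
          (h3 A).mpr hd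
        simp [this, hd]
      · have hk : (Finset.univ.filter (fun b => ∀ a ∈ A, a ≠ b ∧ ¬ H.Adj a b)).card ≠ 0 :=
          fun h => hd ((h3 A).mp h)
        rw [if_neg hd]
        push_cast
        rw [show ((2 : ZMod 2)) = 0 from rfl, zero_pow hk]
    rw [h1, Nat.cast_sum]
    rw [Finset.sum_congr rfl (fun A _ => h4 A)]
    rw [Finset.sum_boole]
    simp [Finset.powerset_univ]
  rw [← hB, hA]

lemma odd_of_cast_eq_one (n : ℕ) (h : ((n : ZMod 2)) = 1) : Odd n := by
  rw [Nat.odd_iff]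
  rcases Nat.mod_two_eq_zero_or_one n with h0 | h1
  · rw [← ZMod.natCast_mod, h0] at h
    simp at h
  · exact h1

open scoped Classical in
/-- `d(G) - d(G - v)` is even. -/
theorem stmt_13 [Fintype V] [DecidableEq V] (G : SimpleGraph V) (v : V) :
    Even (((Finset.univ.powerset.filter (fun W => dominates G W)).card : ℤ)
      - ((Finset.univ.powerset.filter
          (fun W => dominates (G.induce {u : V | u ≠ v}) W)).card : ℤ)) := by
  have h1 : Odd ((Finset.univ.powerset.filter (fun W => dominates G W)).card) :=
    odd_of_cast_eq_one _ (dom_odd G)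
  have h2 : Odd ((Finset.univ.powerset.filter
      (fun W => dominates (G.induce {u : V | u ≠ v}) W)).card) :=
    odd_of_cast_eq_one _ (dom_odd (G.induce {u : V | u ≠ v}))
  rw [Int.even_sub]
  simp only [Int.even_coe_nat]
  rw [Nat.even_iff, Nat.even_iff, Nat.odd_iff.mp h1, Nat.odd_iff.mp h2]
end

section
/- Let G = (V,E) be a graph. Then D(G,x) = ∑_{W ⊆ V} (−1)^{|W|} (1+x)^{|V ∖ N[W]|}, where N[W] is the closed neighborhood of W in G. -/
open Finset Polynomial

variable {V : Type*}

lemma aux_sum_pow_card {α R : Type*} [DecidableEq α] [CommRing R] (S : Finset α) (x : R) :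
    ∑ T ∈ S.powerset, x ^ T.card = (x + 1) ^ S.card := by
  rw [Finset.sum_powerset_apply_card, add_pow]
  simp [mul_comm]

lemma aux_neg_one_sum {α : Type*} [DecidableEq α] (S : Finset α) :
    ∑ W ∈ S.powerset, (-1 : Polynomial ℤ) ^ W.card = if S = ∅ then 1 else 0 := by
  have := Finset.sum_powerset_neg_one_pow_card (x := S)
  calc ∑ W ∈ S.powerset, (-1 : Polynomial ℤ) ^ W.card
      = C (∑ W ∈ S.powerset, (-1 : ℤ) ^ W.card) := by
        rw [map_sum]; simp
    _ = _ := by rw [this]; split <;> simp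

open scoped Classical in
/-- inclusion–exclusion:
`D(G,x) = ∑_{W ⊆ V} (-1)^|W| (1+x)^{|V ∖ N[W]|}`. -/
theorem stmt_14 [Fintype V] [DecidableEq V] (G : SimpleGraph V) :
    domPoly G
      = ∑ W ∈ (Finset.univ : Finset V).powerset,
          (-1 : Polynomial ℤ) ^ W.card *
            (1 + X) ^ (Finset.univ.filter
              (fun x : V => ¬ (x ∈ W ∨ ∃ u ∈ W, G.Adj u x))).card := by
  classical
  set N : Finset V → Finset V := fun W =>
    Finset.univ.filter (fun x : V => ¬ (x ∈ W ∨ ∃ u ∈ W, G.Adj u x)) with hN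
  have hsymm : ∀ T W : Finset V, T ⊆ N W ↔ W ⊆ N T := by
    intro T W
    constructor <;>
    · intro h w hw
      simp only [hN, Finset.mem_filter, Finset.mem_univ, true_and]
      rintro (hwT | ⟨u, hu, hadj⟩)
      · have := h hwT
        simp only [hN, Finset.mem_filter] at this
        exact this.2 (Or.inl hw)
      · have := h hu
        simp only [hN, Finset.mem_filter] at this
        exact this.2 (Or.inr ⟨w, hw, hadj.symm⟩)
  have hpow : ∀ W : Finset V, (N W).powerset =
      (Finset.univ : Finset V).powerset.filter (fun T => T ⊆ N W) := by
    intro W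
    ext T
    simp [Finset.mem_powerset]
  calc domPoly G
      = ∑ T ∈ (Finset.univ : Finset V).powerset, X ^ T.card *
          (if N T = ∅ then 1 else 0) := by
        rw [domPoly, Finset.sum_filter]
        refine Finset.sum_congr rfl fun T _ => ?_
        have : dominates G T ↔ N T = ∅ := by
          simp only [hN, Finset.filter_eq_empty_iff, dominates, Finset.mem_univ,
            forall_const, not_not]
        by_cases h : dominates G T
        · rw [if_pos h, if_pos (this.mp h), mul_one]
        · rw [if_neg h, if_neg (fun he => h (this.mpr he)), mul_zero]
    _ = ∑ T ∈ (Finset.univ : Finset V).powerset, X ^ T.card *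
          ∑ W ∈ (N T).powerset, (-1 : Polynomial ℤ) ^ W.card := by
        refine Finset.sum_congr rfl fun T _ => ?_
        rw [aux_neg_one_sum]
    _ = ∑ T ∈ (Finset.univ : Finset V).powerset,
          ∑ W ∈ (Finset.univ : Finset V).powerset,
            if W ⊆ N T then (-1 : Polynomial ℤ) ^ W.card * X ^ T.card else 0 := by
        refine Finset.sum_congr rfl fun T _ => ?_
        rw [hpow, Finset.sum_filter, Finset.mul_sum]
        refine Finset.sum_congr rfl fun W _ => ?_
        split <;> ring
    _ = ∑ W ∈ (Finset.univ : Finset V).powerset,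
          (-1 : Polynomial ℤ) ^ W.card * ∑ T ∈ (N W).powerset, X ^ T.card := by
        rw [Finset.sum_comm]
        refine Finset.sum_congr rfl fun W _ => ?_
        rw [hpow, Finset.sum_filter, Finset.mul_sum]
        refine Finset.sum_congr rfl fun T _ => ?_
        by_cases h : W ⊆ N T
        · rw [if_pos h, if_pos ((hsymm T W).mpr h)]
        · rw [if_neg h, if_neg (fun h' => h ((hsymm T W).mp h')), mul_zero]
    _ = _ := by
        refine Finset.sum_congr rfl fun W _ => ?_
        rw [aux_sum_pow_card, add_comm]
end

section
/- Let G = (V,E) be a graph with n vertices. For each 0 ≤ k ≤ n, the number of dominating sets of G of cardinality k equals ∑_{W ⊆ V, |N[W]| ≤ n−k} (−1)^{|W|} · C(n − |N[W]|, k), where C denotes the binomial coefficient. -/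
open Finset Polynomial

variable {V : Type*}

open scoped Classical in
/-- closed neighborhood as a finset -/
noncomputable def NBD [Fintype V] (G : SimpleGraph V) (W : Finset V) : Finset V :=
  Finset.univ.filter (fun x : V => x ∈ W ∨ ∃ u ∈ W, G.Adj u x)

lemma mem_NBD [Fintype V] (G : SimpleGraph V) (W : Finset V) (x : V) :
    x ∈ NBD G W ↔ x ∈ W ∨ ∃ u ∈ W, G.Adj u x := by
  simp [NBD]

lemma NBD_compl_key [Fintype V] [DecidableEq V] (G : SimpleGraph V) (A B : Finset V) :
    A ⊆ (NBD G B)ᶜ ↔ ∀ a ∈ A, ∀ b ∈ B, a ≠ b ∧ ¬ G.Adj a b := by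
  simp only [Finset.subset_iff, Finset.mem_compl, mem_NBD, not_or, not_exists, not_and]
  constructor
  · intro h a ha b hb
    exact ⟨fun e => (h ha).1 (e ▸ hb), fun adj => (h ha).2 b hb adj.symm⟩
  · intro h a ha
    exact ⟨fun haB => (h a ha a haB).1 rfl, fun u hu adj => (h a ha u hu).2 adj.symm⟩

lemma NBD_symm [Fintype V] [DecidableEq V] (G : SimpleGraph V) (S W : Finset V) :
    S ⊆ (NBD G W)ᶜ ↔ W ⊆ (NBD G S)ᶜ := by
  rw [NBD_compl_key, NBD_compl_key]
  constructor
  · intro h a ha b hb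
    exact ⟨(h b hb a ha).1.symm, fun adj => (h b hb a ha).2 adj.symm⟩
  · intro h a ha b hb
    exact ⟨(h b hb a ha).1.symm, fun adj => (h b hb a ha).2 adj.symm⟩

open scoped Classical in
/-- the number of dominating sets of cardinality `k` equals
`∑_{W ⊆ V, |N[W]| ≤ n-k} (-1)^|W| C(n - |N[W]|, k)`. -/
theorem stmt_15 [Fintype V] [DecidableEq V] (G : SimpleGraph V)
    (n : ℕ) (hn : n = Fintype.card V) (k : ℕ) (hk : k ≤ n) :
    ((Finset.univ.powerset.filter
        (fun W : Finset V => dominates G W ∧ W.card = k)).card : ℤ)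
      = ∑ W ∈ (Finset.univ : Finset V).powerset.filter
          (fun W : Finset V =>
            (Finset.univ.filter (fun x : V => x ∈ W ∨ ∃ u ∈ W, G.Adj u x)).card ≤ n - k),
          (-1 : ℤ) ^ W.card *
            ((n - (Finset.univ.filter
              (fun x : V => x ∈ W ∨ ∃ u ∈ W, G.Adj u x)).card).choose k : ℤ) := by
  have hrw : ∀ W : Finset V,
      (Finset.univ.filter (fun x : V => x ∈ W ∨ ∃ u ∈ W, G.Adj u x)) = NBD G W := by
    intro W; ext x; simp [mem_NBD]
  simp only [hrw]
  have hNcard : ∀ W : Finset V, (NBD G W).card ≤ n := by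
    intro W; rw [hn]; exact card_le_univ _
  -- Step 1: extend the sum to the full powerset
  have step1 : (∑ W ∈ (Finset.univ : Finset V).powerset.filter
          (fun W : Finset V => (NBD G W).card ≤ n - k),
          (-1 : ℤ) ^ W.card * ((n - (NBD G W).card).choose k : ℤ))
      = ∑ W ∈ (Finset.univ : Finset V).powerset,
          ((-1 : ℤ) ^ W.card * ((n - (NBD G W).card).choose k : ℤ)) := by
    refine Finset.sum_subset (filter_subset _ _) ?_
    intro W hW hWnot
    simp only [mem_filter, mem_powerset, not_and] at hWnot
    have h1 : ¬ (NBD G W).card ≤ n - k := hWnot (by simp)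
    have h2 : n - (NBD G W).card < k := by
      have := hNcard W; omega
    rw [Nat.choose_eq_zero_of_lt h2]
    ring
  rw [step1]
  -- Step 2: choose as a count of k-subsets of the complement of the neighborhood
  have step2 : ∀ W : Finset V,
      (((n - (NBD G W).card).choose k : ℕ) : ℤ)
        = ∑ S ∈ (Finset.univ : Finset V).powersetCard k,
            (if S ⊆ (NBD G W)ᶜ then (1 : ℤ) else 0) := by
    intro W
    have hc : ((NBD G W)ᶜ).card = n - (NBD G W).card := by
      rw [card_compl, hn]
    have heq : ((NBD G W)ᶜ).powersetCard k
        = ((Finset.univ : Finset V).powersetCard k).filter (fun S => S ⊆ (NBD G W)ᶜ) := by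
      ext S
      simp [mem_powersetCard, mem_filter]
      tauto
    rw [← Finset.sum_filter, ← heq, Finset.sum_const, nsmul_eq_mul, mul_one,
      card_powersetCard, hc]
  simp_rw [step2, Finset.mul_sum]
  rw [Finset.sum_comm]
  -- Step 3: inner sum is an indicator of domination
  have step3 : ∀ S : Finset V,
      (∑ W ∈ (Finset.univ : Finset V).powerset,
        (-1 : ℤ) ^ W.card * (if S ⊆ (NBD G W)ᶜ then (1 : ℤ) else 0))
      = (if (NBD G S)ᶜ = ∅ then (1 : ℤ) else 0) := by
    intro S
    have h1 : ∀ W ∈ (Finset.univ : Finset V).powerset,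
        (-1 : ℤ) ^ W.card * (if S ⊆ (NBD G W)ᶜ then (1 : ℤ) else 0)
        = if W ⊆ (NBD G S)ᶜ then (-1 : ℤ) ^ W.card else 0 := by
      intro W _
      by_cases h : W ⊆ (NBD G S)ᶜ
      · rw [if_pos h, if_pos ((NBD_symm G S W).mpr h), mul_one]
      · rw [if_neg h, if_neg (fun hs => h ((NBD_symm G S W).mp hs)), mul_zero]
    rw [Finset.sum_congr rfl h1, ← Finset.sum_filter]
    have h2 : ((Finset.univ : Finset V).powerset).filter (fun W => W ⊆ (NBD G S)ᶜ)
        = ((NBD G S)ᶜ).powerset := by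
      ext W; simp [mem_powerset]
    rw [h2, Finset.sum_powerset_neg_one_pow_card]
  rw [Finset.sum_congr rfl (fun S _ => step3 S), ← Finset.sum_filter, Finset.sum_const]
  -- Step 4: identify the remaining count with dominating k-sets
  have h4 : (((Finset.univ : Finset V).powersetCard k).filter (fun S => (NBD G S)ᶜ = ∅))
      = Finset.univ.powerset.filter (fun W : Finset V => dominates G W ∧ W.card = k) := by
    ext S
    simp only [mem_filter, mem_powersetCard, mem_powerset, subset_univ, true_and,
      Finset.compl_eq_empty_iff]
    constructor
    · rintro ⟨hcard, huniv⟩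
      refine ⟨fun v => ?_, hcard⟩
      have : v ∈ NBD G S := huniv ▸ mem_univ v
      simpa [mem_NBD] using this
    · rintro ⟨hdom, hcard⟩
      refine ⟨hcard, ?_⟩
      apply Finset.eq_univ_of_forall
      intro v
      simpa [mem_NBD] using hdom v
  rw [h4]
  simp
end

section
/- Let G = (V,E) be a graph with n vertices and domination number γ(G). Then γ(G) is the smallest nonnegative integer k such that ∑_{W ⊆ V} (−1)^{|W|} · C(n − |N[W]|, k) ≠ 0. -/
open Finset Polynomial

variable {V : Type*}

open scoped Classical in
lemma stmt16_key [Fintype V] [DecidableEq V] (G : SimpleGraph V) (k : ℕ) :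
    (∑ W ∈ (Finset.univ : Finset V).powerset,
      (-1 : ℤ) ^ W.card *
        ((Fintype.card V - (Finset.univ.filter
          (fun x : V => x ∈ W ∨ ∃ u ∈ W, G.Adj u x)).card).choose k : ℤ))
    = (((Finset.univ : Finset V).powersetCard k).filter (fun S => dominates G S)).card := by
  have hN : ∀ W : Finset V,
      Fintype.card V - (Finset.univ.filter
        (fun x : V => x ∈ W ∨ ∃ u ∈ W, G.Adj u x)).card
      = (Finset.univ.filter (fun x : V => x ∈ W ∨ ∃ u ∈ W, G.Adj u x))ᶜ.card := by
    intro W; rw [Finset.card_compl]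
  calc (∑ W ∈ (Finset.univ : Finset V).powerset,
      (-1 : ℤ) ^ W.card *
        ((Fintype.card V - (Finset.univ.filter
          (fun x : V => x ∈ W ∨ ∃ u ∈ W, G.Adj u x)).card).choose k : ℤ))
      = ∑ W ∈ (Finset.univ : Finset V).powerset,
          ∑ S ∈ ((Finset.univ.filter
            (fun x : V => x ∈ W ∨ ∃ u ∈ W, G.Adj u x))ᶜ).powersetCard k,
            (-1 : ℤ) ^ W.card := by
        refine Finset.sum_congr rfl fun W _ => ?_
        rw [hN W, ← Finset.card_powersetCard, Finset.sum_const, nsmul_eq_mul, mul_comm]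
    _ = ∑ S ∈ (Finset.univ : Finset V).powersetCard k,
          ∑ W ∈ ((Finset.univ.filter
            (fun x : V => x ∈ S ∨ ∃ u ∈ S, G.Adj u x))ᶜ).powerset,
            (-1 : ℤ) ^ W.card := by
        refine Finset.sum_comm' ?_
        intro W S
        simp only [Finset.mem_powerset, Finset.mem_powersetCard, Finset.subset_iff,
          Finset.mem_compl, Finset.mem_filter, Finset.mem_univ, true_and,
          Finset.subset_univ, and_true]
        constructor
        · rintro ⟨-, hS, hk⟩
          refine ⟨fun {w} hw hw' => ?_, fun _ _ => trivial, hk⟩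
          rcases hw' with hw' | ⟨u, hu, hadj⟩
          · exact hS hw' (Or.inl hw)
          · exact hS hu (Or.inr ⟨w, hw, hadj.symm⟩)
        · rintro ⟨hW, -, hk⟩
          refine ⟨fun _ _ => trivial, fun {s} hs hs' => ?_, hk⟩
          rcases hs' with hs' | ⟨u, hu, hadj⟩
          · exact hW hs' (Or.inl hs)
          · exact hW hu (Or.inr ⟨s, hs, hadj.symm⟩)
    _ = ∑ S ∈ (Finset.univ : Finset V).powersetCard k,
          (if dominates G S then (1 : ℤ) else 0) := by
        refine Finset.sum_congr rfl fun S _ => ?_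
        rw [Finset.sum_powerset_neg_one_pow_card]
        congr 1
        rw [Finset.compl_eq_empty_iff, Finset.filter_eq_self, eq_iff_iff]
        exact ⟨fun h v => h v (Finset.mem_univ v), fun h v _ => h v⟩
    _ = (((Finset.univ : Finset V).powersetCard k).filter
          (fun S => dominates G S)).card := by
        rw [Finset.sum_boole]

open scoped Classical in
/-- the domination number `γ(G)` is the least `k` such that
`∑_{W ⊆ V} (-1)^|W| C(n - |N[W]|, k) ≠ 0`. -/
theorem stmt_16 [Fintype V] [DecidableEq V] (G : SimpleGraph V) :
    IsLeast
      {k : ℕ |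
        (∑ W ∈ (Finset.univ : Finset V).powerset,
          (-1 : ℤ) ^ W.card *
            ((Fintype.card V - (Finset.univ.filter
              (fun x : V => x ∈ W ∨ ∃ u ∈ W, G.Adj u x)).card).choose k : ℤ)) ≠ 0}
      (sInf {k : ℕ | ∃ W : Finset V, dominates G W ∧ W.card = k}) := by
  have hne : {k : ℕ | ∃ W : Finset V, dominates G W ∧ W.card = k}.Nonempty :=
    ⟨(Finset.univ : Finset V).card, Finset.univ, fun v => Or.inl (Finset.mem_univ v), rfl⟩
  constructor
  · show _ ≠ 0
    rw [stmt16_key]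
    obtain ⟨W, hW, hcard⟩ := Nat.sInf_mem hne
    have : W ∈ ((Finset.univ : Finset V).powersetCard
        (sInf {k : ℕ | ∃ W : Finset V, dominates G W ∧ W.card = k})).filter
        (fun S => dominates G S) := by
      simp [Finset.mem_powersetCard, hcard, hW]
    have hpos : 0 < (((Finset.univ : Finset V).powersetCard
        (sInf {k : ℕ | ∃ W : Finset V, dominates G W ∧ W.card = k})).filter
        (fun S => dominates G S)).card := Finset.card_pos.mpr ⟨W, this⟩
    exact_mod_cast hpos.ne'
  · intro k hk
    rw [Set.mem_setOf_eq, stmt16_key] at hk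
    have : (((Finset.univ : Finset V).powersetCard k).filter
        (fun S => dominates G S)).Nonempty := by
      rw [← Finset.card_pos]
      by_contra h
      push_neg at h
      exact hk (by exact_mod_cast Nat.le_zero.mp h)
    obtain ⟨S, hS⟩ := this
    simp only [Finset.mem_filter, Finset.mem_powersetCard] at hS
    exact Nat.sInf_le ⟨S, hS.2, hS.1.2⟩
end
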